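/- Soundness of ≃ with respect to λA-frames: let (W, ▷) be a λA-frame and fix a syntactical λ-algebra (V, ·, ⟦ ⟧). If A ≃ B, then I(A)^η_p = I(B)^η_p for every hereditary type environment η and every world p ∈ W. -/

import Mathlib

namespace LambdaA

/-! ### Type expressions (de Bruijn representation for `μ`-binders) -/

inductive Ty : Type
  | var : ℕ → Ty
  | arrow : Ty → Ty → Ty
  | box : Ty → Ty
  | mu : Ty → Ty
  deriving DecidableEq

namespace Ty

def rename : (ℕ → ℕ) → Ty → Ty
  | f, var n => var (f n)
  | f, arrow A B => arrow (rename f A) (rename f B)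
  | f, box A => box (rename f A)
  | f, mu A => mu (rename (fun n => match n with | 0 => 0 | Nat.succ m => f m + 1) A)

def shiftUp : Ty → Ty := rename Nat.succ

def subst : (ℕ → Ty) → Ty → Ty
  | σ, var n => σ n
  | σ, arrow A B => arrow (subst σ A) (subst σ B)
  | σ, box A => box (subst σ A)
  | σ, mu A => mu (subst (fun n => match n with | 0 => var 0 | Nat.succ m => shiftUp (σ m)) A)

end Ty

/-- `openT A B`: instantiate the outermost bound variable (index `0`) of the body `A` by `B`. -/
def openT (A B : Ty) : Ty :=
  Ty.subst (fun n => match n with | 0 => B | Nat.succ m => Ty.var m) A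

/-- `substFree A X B` is the capture-avoiding substitution `A[B/X]` for the free variable `X`. -/
def substFree (A : Ty) (X : ℕ) (B : Ty) : Ty :=
  Ty.subst (fun n => if n = X then B else Ty.var n) A

/-- The unfolding `μX.A ↦ A[μX.A/X]` of a recursive type. -/
def unfoldMu (A : Ty) : Ty := openT A (Ty.mu A)

/-- Free occurrence of a type variable in a type expression. -/
def freeInTy : ℕ → Ty → Prop
  | X, .var n => n = X
  | X, .arrow A B => freeInTy X A ∨ freeInTy X B
  | X, .box A => freeInTy X A
  | X, .mu A => freeInTy (X + 1) A

/-- Auxiliary ⊤-variant test.  `tvAux A d t` scans the tail of `A`, where `d` is the number of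
`μ`-binders passed so far and `t` is the number of (outermost) such binders inside which a `•`
has already been encountered.  A variable qualifies iff it is bound by one of the `μ`-binders
and at least one `•` occurs inside that binder. -/
def tvAux : Ty → ℕ → ℕ → Bool
  | .var j, d, t => decide (d - t ≤ j ∧ j < d)
  | .box A, d, _ => tvAux A d d
  | .mu A, d, t => tvAux A (d + 1) t
  | .arrow _ B, d, t => tvAux B d t

/-- `A` is a ⊤-variant. -/
def IsTV (A : Ty) : Prop := tvAux A 0 0 = true

/-- `Proper A X` : the type expression `A` is proper in the (free) variable `X`. -/
def Proper : Ty → ℕ → Prop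
  | .var n, X => n ≠ X
  | .box _, _ => True
  | .arrow A B, X => (Proper A X ∧ Proper B X) ∨ IsTV B
  | .mu A, X => Proper A (X + 1) ∨ IsTV (.mu A)

/-- Well-formed type expressions: every recursive type `μX.A` has `A` proper in `X`. -/
def WF : Ty → Prop
  | .var _ => True
  | .arrow A B => WF A ∧ WF B
  | .box A => WF A
  | .mu A => WF A ∧ Proper A 0

/-- `⊤ = μX.•X`. -/
def tyTop : Ty := .mu (.box (.var 0))

/-- `•ⁿ A`. -/
def boxN (n : ℕ) (A : Ty) : Ty := Ty.box^[n] A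

/-- The equivalences `≅` (`s = false`) and `≃` (`s = true`) on type expressions. -/
inductive TyEq : Bool → Ty → Ty → Prop
  | refl (s : Bool) (A : Ty) : TyEq s A A
  | symm {s : Bool} {A B : Ty} : TyEq s A B → TyEq s B A
  | trans {s : Bool} {A B C : Ty} : TyEq s A B → TyEq s B C → TyEq s A C
  | boxCongr {s : Bool} {A B : Ty} : TyEq s A B → TyEq s (.box A) (.box B)
  | arrowCongr {s : Bool} {A B C D : Ty} :
      TyEq s A C → TyEq s B D → TyEq s (.arrow A B) (.arrow C D)
  | arrowTop (s : Bool) (A : Ty) : TyEq s (.arrow A tyTop) tyTop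
  | fix (s : Bool) (A : Ty) : TyEq s (.mu A) (unfoldMu A)
  | uniq {s : Bool} {A C : Ty} : TyEq s A (openT C A) → Proper C 0 → TyEq s A (.mu C)
  | kl (A B : Ty) : TyEq true (.box (.arrow A B)) (.arrow (.box A) (.box B))

/-! ### Subtyping -/

/-- Subtyping assumptions: finite sets of pairs of type variables. -/
abbrev Assum := Finset (ℕ × ℕ)

/-- Well-formedness of a subtyping assumption: every type variable occurs at most once. -/
def AssumOK (γ : Assum) : Prop :=
  (∀ p ∈ γ, (p : ℕ × ℕ).1 ≠ p.2) ∧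
    ∀ p ∈ γ, ∀ q ∈ γ, p ≠ q →
      (p : ℕ × ℕ).1 ≠ (q : ℕ × ℕ).1 ∧ p.1 ≠ q.2 ∧ p.2 ≠ q.1 ∧ p.2 ≠ q.2

/-- `X` occurs in the subtyping assumption `γ`. -/
def AssumVar (γ : Assum) (X : ℕ) : Prop :=
  ∃ p ∈ γ, (p : ℕ × ℕ).1 = X ∨ (p : ℕ × ℕ).2 = X

/-- Derivability of subtyping judgments `γ ⊢ A ⪯ B`. -/
inductive Sub : Assum → Ty → Ty → Prop
  | assump {γ : Assum} {X Y : ℕ} : AssumOK γ → (X, Y) ∈ γ → Sub γ (.var X) (.var Y)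
  | top {γ : Assum} (A : Ty) : AssumOK γ → Sub γ A tyTop
  | refl {γ : Assum} {A B : Ty} : AssumOK γ → TyEq true A B → Sub γ A B
  | trans {γ₁ γ₂ : Assum} {A B C : Ty} :
      Sub γ₁ A B → Sub γ₂ B C → AssumOK (γ₁ ∪ γ₂) → Sub (γ₁ ∪ γ₂) A C
  | boxMono {γ : Assum} {A B : Ty} : Sub γ A B → Sub γ (.box A) (.box B)
  | arrowMono {γ₁ γ₂ : Assum} {A A' B B' : Ty} :
      Sub γ₁ A' A → Sub γ₂ B B' → AssumOK (γ₁ ∪ γ₂) →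
      Sub (γ₁ ∪ γ₂) (.arrow A B) (.arrow A' B')
  | muMono {γ : Assum} {X Y : ℕ} {A B : Ty} :
      AssumOK (insert (X, Y) γ) →
      Sub (insert (X, Y) γ) (openT A (.var X)) (openT B (.var Y)) →
      ¬ AssumVar γ X → ¬ AssumVar γ Y →
      ¬ freeInTy X (openT B (.var Y)) → ¬ freeInTy Y (openT A (.var X)) →
      Proper (openT A (.var X)) X → Proper (openT B (.var Y)) Y →
      Sub γ (.mu A) (.mu B)
  | approx {γ : Assum} (A : Ty) : AssumOK γ → Sub γ A (.box A)

/-! ### Untyped λ-terms (locally-nameless representation) -/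

inductive Tm : Type
  | bvar : ℕ → Tm
  | fvar : ℕ → Tm
  | lam : Tm → Tm
  | app : Tm → Tm → Tm
  deriving DecidableEq

def openTmAux (N : Tm) : ℕ → Tm → Tm
  | _, .fvar y => .fvar y
  | k, .bvar i => if i = k then N else .bvar i
  | k, .lam M => .lam (openTmAux N (k + 1) M)
  | k, .app M₁ M₂ => .app (openTmAux N k M₁) (openTmAux N k M₂)

/-- Instantiate the outermost bound variable of the body `M` by `N`. -/
def openTm (M N : Tm) : Tm := openTmAux N 0 M

/-- `substTm M x N` is the substitution `M[N/x]` for the free variable `x`. -/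
def substTm : Tm → ℕ → Tm → Tm
  | .bvar i, _, _ => .bvar i
  | .fvar y, x, N => if y = x then N else .fvar y
  | .lam M, x, N => .lam (substTm M x N)
  | .app M₁ M₂, x, N => .app (substTm M₁ x N) (substTm M₂ x N)

/-- Free occurrence of an individual variable in a λ-term. -/
def freeTm : ℕ → Tm → Prop
  | _, .bvar _ => False
  | x, .fvar y => y = x
  | x, .lam M => freeTm x M
  | x, .app M₁ M₂ => freeTm x M₁ ∨ freeTm x M₂

/-- One-step β-reduction. -/
inductive Step : Tm → Tm → Prop
  | beta (M N : Tm) : Step (.app (.lam M) N) (openTm M N)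
  | appL {M M' : Tm} (N : Tm) : Step M M' → Step (.app M N) (.app M' N)
  | appR (M : Tm) {N N' : Tm} : Step N N' → Step (.app M N) (.app M N')
  | lamCongr {M M' : Tm} : Step M M' → Step (.lam M) (.lam M')

/-- `→*β`, the reflexive-transitive closure of β-reduction. -/
def Steps : Tm → Tm → Prop := Relation.ReflTransGen Step

/-- β-convertibility `=β`. -/
inductive BetaEq : Tm → Tm → Prop
  | step {M N : Tm} : Step M N → BetaEq M N
  | refl (M : Tm) : BetaEq M M
  | symm {M N : Tm} : BetaEq M N → BetaEq N M
  | trans {M N K : Tm} : BetaEq M N → BetaEq N K → BetaEq M K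

/-! ### Typing -/

/-- Typing contexts: finite sets of (variable, type) pairs. -/
abbrev Ctx := Finset (ℕ × Ty)

/-- Well-formedness of a typing context (functionality). -/
def CtxOK (Γ : Ctx) : Prop :=
  ∀ p ∈ Γ, ∀ q ∈ Γ, (p : ℕ × Ty).1 = (q : ℕ × Ty).1 → p = q

/-- `•Γ`. -/
def boxCtx (Γ : Ctx) : Ctx := Γ.image fun p => (p.1, Ty.box p.2)

/-- All types in the context are well-formed type expressions. -/
def CtxWF (Γ : Ctx) : Prop := ∀ p ∈ Γ, WF (p : ℕ × Ty).2

/-- The typing system λA. -/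
inductive Typing : Ctx → Tm → Ty → Prop
  | var {Γ : Ctx} {x : ℕ} {A : Ty} : CtxOK Γ → (x, A) ∈ Γ → Typing Γ (.fvar x) A
  | shift {Γ : Ctx} {M : Tm} {A : Ty} : Typing (boxCtx Γ) M (.box A) → Typing Γ M A
  | top {Γ : Ctx} (M : Tm) : CtxOK Γ → Typing Γ M tyTop
  | sub {Γ : Ctx} {M : Tm} {A B : Ty} : Typing Γ M A → Sub ∅ A B → Typing Γ M B
  | lamI {Γ : Ctx} {x : ℕ} {A B : Ty} {M : Tm} :
      ¬ freeTm x M →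
      Typing (insert (x, A) Γ) (openTm M (.fvar x)) B →
      Typing Γ (.lam M) (.arrow A B)
  | appE {Γ₁ Γ₂ : Ctx} {M N : Tm} {A B : Ty} :
      Typing Γ₁ M (.arrow A B) → Typing Γ₂ N A → CtxOK (Γ₁ ∪ Γ₂) →
      Typing (Γ₁ ∪ Γ₂) (.app M N) B

/-! ### Frames, λ-algebras and the semantics of types -/

/-- The accessibility relation is conversely well-founded. -/
def ConverselyWF {W : Type*} (acc : W → W → Prop) : Prop :=
  WellFounded fun q p => acc p q

/-- Local linearity of the accessibility relation. -/
def LocallyLinear {W : Type*} (acc : W → W → Prop) : Prop :=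
  ∀ p q, acc p q → ∃ r, Relation.ReflTransGen acc p r ∧ acc r q ∧
    ∀ s, acc r s → Relation.ReflTransGen acc q s

/-- Hereditary type environments. -/
def Hereditary {W : Type*} {V : Type*} (acc : W → W → Prop) (η : ℕ → W → Set V) : Prop :=
  ∀ X p q, acc p q → η X p ⊆ η X q

/-- Syntactical λ-algebras of the untyped λ-calculus. -/
structure LambdaAlgebra (V : Type*) where
  nonempty : Nonempty V
  ap : V → V → V
  den : Tm → (ℕ → V) → V
  den_fvar : ∀ x ρ, den (.fvar x) ρ = ρ x
  den_app : ∀ M N ρ, den (.app M N) ρ = ap (den M ρ) (den N ρ)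
  den_lam : ∀ M x ρ v, ¬ freeTm x M →
    ap (den (.lam M) ρ) v = den (openTm M (.fvar x)) (Function.update ρ x v)
  den_ext : ∀ M ρ ρ', (∀ x, freeTm x M → ρ x = ρ' x) → den M ρ = den M ρ'
  den_beta : ∀ M N ρ, BetaEq M N → den M ρ = den N ρ

/-- The interpretation `I(A)^η_p` of type expressions over a frame, packaged together with
its defining (recursion) equations. -/
structure Interp (W : Type*) (acc : W → W → Prop) (V : Type*) (ap : V → V → V) where
  I : Ty → (ℕ → W → Set V) → W → Set V
  I_tv : ∀ A η p, WF A → IsTV A → I A η p = Set.univ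
  I_var : ∀ X η p, I (.var X) η p = η X p
  I_box : ∀ A η p, WF A → ¬ IsTV (Ty.box A) →
    I (.box A) η p = {u | ∀ q, acc p q → u ∈ I A η q}
  I_arrow : ∀ A B η p, WF A → WF B → ¬ IsTV (Ty.arrow A B) →
    I (.arrow A B) η p =
      {u | ∀ q, Relation.ReflTransGen acc p q → ∀ v ∈ I A η q, ap u v ∈ I B η q}
  I_mu : ∀ A η p, WF (Ty.mu A) → ¬ IsTV (Ty.mu A) →
    I (.mu A) η p = I (unfoldMu A) η p

/-! ### Tail finiteness and related notions -/

/-- The sets `TF^V`. -/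
inductive TFmem : Set ℕ → Ty → Prop
  | var {V : Set ℕ} {X : ℕ} : X ∉ V → TFmem V (.var X)
  | box {V : Set ℕ} {A : Ty} : TFmem V A → TFmem V (.box A)
  | arrow {V : Set ℕ} (A : Ty) {B : Ty} : TFmem V B → TFmem V (.arrow A B)
  | mu {V : Set ℕ} {A : Ty} : WF (.mu A) → TFmem ({0} ∪ (Nat.succ '' V)) A → TFmem V (.mu A)

/-- Shapes `•^{m₀}(B₁ → •^{m₁}(B₂ → ⋯ → •^{m_{n-1}}(Bₙ → •^{mₙ} X)⋯))`. -/
inductive TFShape : Ty → Prop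
  | var (X : ℕ) : TFShape (.var X)
  | box {A : Ty} : TFShape A → TFShape (.box A)
  | arrow (A : Ty) {B : Ty} : TFShape B → TFShape (.arrow A B)

/-- Tail finite type expressions. -/
def TailFinite (A : Ty) : Prop := ∃ C, TFShape C ∧ WF C ∧ TyEq false A C

-- Effectively occurring type variables, positively (`petv`) and negatively (`netv`).
mutual
  def petv : Ty → Finset ℕ
    | .var X => {X}
    | .box A => if tvAux (.box A) 0 0 then ∅ else petv A
    | .arrow A B => if tvAux (.arrow A B) 0 0 then ∅ else netv A ∪ petv B
    | .mu A =>
        if tvAux (.mu A) 0 0 then ∅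
        else if 0 ∈ netv A then ((petv A ∪ netv A).erase 0).image (· - 1)
        else ((petv A).erase 0).image (· - 1)
  def netv : Ty → Finset ℕ
    | .var _ => ∅
    | .box A => if tvAux (.box A) 0 0 then ∅ else netv A
    | .arrow A B => if tvAux (.arrow A B) 0 0 then ∅ else petv A ∪ netv B
    | .mu A =>
        if tvAux (.mu A) 0 0 then ∅
        else if 0 ∈ netv A then ((netv A ∪ petv A).erase 0).image (· - 1)
        else ((netv A).erase 0).image (· - 1)
end

/-- Positively finite type expressions. -/
def PosFin (A : Ty) : Prop :=
  ∀ (s : Bool) (B C : Ty) (X : ℕ), WF B → WF C →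
    TyEq s A (substFree B X C) → X ∈ petv B → X ∉ netv B → TailFinite C

/-- Negatively finite type expressions. -/
def NegFin (A : Ty) : Prop :=
  ∀ (s : Bool) (B C : Ty) (X : ℕ), WF B → WF C →
    TyEq s A (substFree B X C) → X ∈ netv B → X ∉ petv B → TailFinite C

/-! ### Head normal forms, maximality, normal forms -/

/-- `y N₁ … Nₙ` with every argument satisfying `P`. -/
inductive SpineArgs (P : Tm → Prop) : Tm → Prop
  | fvar (x : ℕ) : SpineArgs P (.fvar x)
  | bvar (i : ℕ) : SpineArgs P (.bvar i)
  | app {M N : Tm} : SpineArgs P M → P N → SpineArgs P (.app M N)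

/-- Head normal forms `λx₁…λxₘ. y N₁ … Nₙ` whose arguments satisfy `P`. -/
inductive HNFP (P : Tm → Prop) : Tm → Prop
  | spine {M : Tm} : SpineArgs P M → HNFP P M
  | lam {M : Tm} : HNFP P M → HNFP P (.lam M)

/-- Head normal forms. -/
def HNF : Tm → Prop := HNFP fun _ => True

/-- Maximality at a given depth. -/
def MaxAt : ℕ → Tm → Prop
  | 0, _ => True
  | n + 1, M => ∃ M', Steps M M' ∧ HNFP (MaxAt n) M'

/-- Maximal λ-terms: the Böhm tree contains no `⊥`. -/
def Maximal (M : Tm) : Prop := ∀ n, MaxAt n M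

/-- β-normal forms. -/
def NormalForm (M : Tm) : Prop := ∀ N, ¬ Step M N

/-- Type expressions without any occurrence of the modal operator `•`. -/
def NoBox : Ty → Prop
  | .var _ => True
  | .arrow A B => NoBox A ∧ NoBox B
  | .box _ => False
  | .mu A => NoBox A

/-! ### The modal logic LAμ and its Kripke semantics -/

/-- The logic LAμ (formulae are type expressions). -/
inductive LAmu : Finset Ty → Ty → Prop
  | assump {Γ : Finset Ty} {A : Ty} : LAmu (insert A Γ) A
  | nec {Γ₁ : Finset Ty} (Γ₂ : Finset Ty) {A : Ty} :
      LAmu Γ₁ A → LAmu (Γ₁.image Ty.box ∪ Γ₂) (.box A)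
  | four {Γ : Finset Ty} {A : Ty} : LAmu Γ (.box A) → LAmu Γ (.box (.box A))
  | impI {Γ : Finset Ty} {A B : Ty} : LAmu (insert A Γ) B → LAmu Γ (.arrow A B)
  | impE {Γ₁ Γ₂ : Finset Ty} {A B : Ty} :
      LAmu Γ₁ (.arrow A B) → LAmu Γ₂ A → LAmu (Γ₁ ∪ Γ₂) B
  | fold {Γ : Finset Ty} {A : Ty} : LAmu Γ (unfoldMu A) → LAmu Γ (.mu A)
  | unfold {Γ : Finset Ty} {A : Ty} : LAmu Γ (.mu A) → LAmu Γ (unfoldMu A)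
  | lrule {Γ : Finset Ty} {A B : Ty} :
      LAmu Γ (.arrow (.box A) (.box B)) → LAmu Γ (.box (.arrow A B))
  | approx {Γ : Finset Ty} {A : Ty} : LAmu Γ A → LAmu Γ (.box A)

/-- The Kripke satisfaction relation over an LA-frame `(W, tri, R)` under a valuation `ξ`,
packaged with its defining (recursion) equations. -/
structure SatFun {W : Type*} (tri R : W → W → Prop) (ξ : ℕ → W → Prop) where
  sat : Ty → W → Prop
  sat_tv : ∀ A p, WF A → IsTV A → sat A p
  sat_var : ∀ X p, sat (.var X) p ↔ ξ X p
  sat_box : ∀ A p, WF A → ¬ IsTV (Ty.box A) →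
    (sat (.box A) p ↔ ∀ q, tri p q → sat A q)
  sat_arrow : ∀ A B p, WF A → WF B → ¬ IsTV (Ty.arrow A B) →
    (sat (.arrow A B) p ↔ ∀ q, R p q → sat A q → sat B q)
  sat_mu : ∀ A p, WF (Ty.mu A) → ¬ IsTV (Ty.mu A) →
    (sat (.mu A) p ↔ sat (unfoldMu A) p)

/-! ## Section 1: sigma calculus -/

namespace Ty

/-- lift of a renaming -/
def upr (f : ℕ → ℕ) : ℕ → ℕ := fun n => match n with | 0 => 0 | Nat.succ m => f m + 1

/-- lift of a substitution -/
def ups (σ : ℕ → Ty) : ℕ → Ty := fun n => match n with | 0 => var 0 | Nat.succ m => shiftUp (σ m)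

lemma rename_def_mu (f : ℕ → ℕ) (A : Ty) : rename f (mu A) = mu (rename (upr f) A) := rfl
lemma subst_def_mu (σ : ℕ → Ty) (A : Ty) : subst σ (mu A) = mu (subst (ups σ) A) := rfl

lemma rename_ext {f g : ℕ → ℕ} (h : ∀ n, f n = g n) : ∀ A, rename f A = rename g A := by
  intro A
  induction A generalizing f g with
  | var n => simp [rename, h]
  | arrow B C ihB ihC => simp [rename]; exact ⟨ihB h, ihC h⟩
  | box B ih => simp [rename]; exact ih h
  | mu B ih =>
      show mu _ = mu _
      congr 1
      apply ih
      intro n; cases n with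
      | zero => rfl
      | succ m => simp [upr, h]

lemma subst_ext {σ τ : ℕ → Ty} (h : ∀ n, σ n = τ n) : ∀ A, subst σ A = subst τ A := by
  intro A
  induction A generalizing σ τ with
  | var n => simp [subst, h]
  | arrow B C ihB ihC => simp [subst]; exact ⟨ihB h, ihC h⟩
  | box B ih => simp [subst]; exact ih h
  | mu B ih =>
      show mu _ = mu _
      congr 1
      apply ih
      intro n; cases n with
      | zero => rfl
      | succ m => simp [ups, h]

lemma rename_rename (f g : ℕ → ℕ) (A : Ty) :
    rename f (rename g A) = rename (fun n => f (g n)) A := by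
  induction A generalizing f g with
  | var n => rfl
  | arrow B C ihB ihC => simp [rename, ihB, ihC]
  | box B ih => simp [rename, ih]
  | mu B ih =>
      simp only [rename_def_mu, subst_def_mu]
      congr 1
      rw [ih]
      apply rename_ext
      intro n; cases n <;> rfl

lemma subst_rename (σ : ℕ → Ty) (f : ℕ → ℕ) (A : Ty) :
    subst σ (rename f A) = subst (fun n => σ (f n)) A := by
  induction A generalizing σ f with
  | var n => rfl
  | arrow B C ihB ihC => simp [rename, subst, ihB, ihC]
  | box B ih => simp [rename, subst, ih]
  | mu B ih =>
      simp only [rename_def_mu, subst_def_mu]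
      congr 1
      rw [ih]
      apply subst_ext
      intro n; cases n <;> rfl

lemma rename_subst (f : ℕ → ℕ) (σ : ℕ → Ty) (A : Ty) :
    rename f (subst σ A) = subst (fun n => rename f (σ n)) A := by
  induction A generalizing σ f with
  | var n => rfl
  | arrow B C ihB ihC => simp [rename, subst, ihB, ihC]
  | box B ih => simp [rename, subst, ih]
  | mu B ih =>
      simp only [rename_def_mu, subst_def_mu]
      congr 1
      rw [ih]
      apply subst_ext
      intro n
      cases n with
      | zero => rfl
      | succ m =>
          show rename (upr f) (shiftUp (σ m)) = shiftUp (rename f (σ m))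
          simp only [shiftUp, rename_rename]
          apply rename_ext; intro n; rfl

lemma subst_subst (σ τ : ℕ → Ty) (A : Ty) :
    subst σ (subst τ A) = subst (fun n => subst σ (τ n)) A := by
  induction A generalizing σ τ with
  | var n => rfl
  | arrow B C ihB ihC => simp [subst, ihB, ihC]
  | box B ih => simp [subst, ih]
  | mu B ih =>
      simp only [subst_def_mu]
      congr 1
      rw [ih]
      apply subst_ext
      intro n
      cases n with
      | zero => rfl
      | succ m =>
          show subst (ups σ) (shiftUp (τ m)) = shiftUp (subst σ (τ m))
          simp only [shiftUp, subst_rename, rename_subst]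
          apply subst_ext; intro n; rfl

lemma subst_var (A : Ty) : subst var A = A := by
  induction A with
  | var n => rfl
  | arrow B C ihB ihC => simp [subst, ihB, ihC]
  | box B ih => simp [subst, ih]
  | mu B ih =>
      simp only [subst_def_mu]
      congr 1
      rw [subst_ext (σ := ups var) (τ := var) (by intro n; cases n <;> rfl) B, ih]

lemma rename_eq_subst (f : ℕ → ℕ) (A : Ty) : rename f A = subst (fun n => var (f n)) A := by
  induction A generalizing f with
  | var n => rfl
  | arrow B C ihB ihC => simp [rename, subst, ihB, ihC]
  | box B ih => simp [rename, subst, ih]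
  | mu B ih =>
      simp only [rename_def_mu, subst_def_mu]
      congr 1
      rw [ih]
      apply subst_ext
      intro n; cases n <;> rfl

end Ty

open Ty

/-- key commutation: substitution under openT -/
lemma subst_openT (σ : ℕ → Ty) (A B : Ty) :
    Ty.subst σ (openT A B) = openT (Ty.subst (ups σ) A) (Ty.subst σ B) := by
  unfold openT
  rw [subst_subst, subst_subst]
  apply subst_ext
  intro n
  cases n with
  | zero => rfl
  | succ m =>
      show Ty.subst σ (var m) = Ty.subst _ (shiftUp (σ m))
      simp only [shiftUp, subst_rename, subst]
      exact (subst_var (σ m)).symm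

lemma subst_unfoldMu (σ : ℕ → Ty) (A : Ty) :
    Ty.subst σ (unfoldMu A) = unfoldMu (Ty.subst (ups σ) A) := by
  unfold unfoldMu
  rw [subst_openT]; rfl

lemma rename_openT (f : ℕ → ℕ) (A B : Ty) :
    Ty.rename f (openT A B) = openT (Ty.rename (upr f) A) (Ty.rename f B) := by
  rw [rename_eq_subst, rename_eq_subst, rename_eq_subst, subst_openT]
  congr 1
  apply subst_ext
  intro n; cases n with
  | zero => rfl
  | succ m =>
      show ups (fun n => var (f n)) (m+1) = var (upr f (m+1))
      simp [ups, upr, shiftUp, rename]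

lemma rename_unfoldMu (f : ℕ → ℕ) (A : Ty) :
    Ty.rename f (unfoldMu A) = unfoldMu (Ty.rename (upr f) A) := by
  unfold unfoldMu
  rw [rename_openT]; rfl



/-! ## Section 2: tail data -/

def tk : Ty → ℕ
  | .var _ => 0 | .box A => tk A | .arrow _ B => tk B | .mu A => tk A + 1
def tdE : Ty → ℕ
  | .var j => j | .box A => tdE A | .arrow _ B => tdE B | .mu A => tdE A
def tb : Ty → ℕ
  | .var _ => 0 | .box A => tb A + 1 | .arrow _ B => tb B | .mu A => tb A
def cB : Ty → ℕ
  | .var _ => 0 | .box A => cB A | .arrow _ B => cB B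
  | .mu A => if tdE A = tk A then tb A else cB A

lemma tv_char : ∀ (A : Ty) (d t : ℕ), t ≤ d →
    (tvAux A d t = true ↔
      ((tdE A < tk A ∧ 1 ≤ cB A) ∨
        (tk A ≤ tdE A ∧ tdE A - tk A < d ∧ (1 ≤ tb A ∨ (d - t) + tk A ≤ tdE A)))) := by
  intro A
  induction A with
  | var j =>
      intro d t ht
      simp only [tvAux, tk, tdE, tb, cB, decide_eq_true_eq]
      omega
  | arrow B C _ ihC =>
      intro d t ht
      simpa only [tvAux, tk, tdE, tb, cB] using ihC d t ht
  | box B ih =>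
      intro d t ht
      simp only [tvAux, tk, tdE, tb, cB]
      rw [ih d d le_rfl]
      omega
  | mu B ih =>
      intro d t ht
      simp only [tvAux, tk, tdE, tb, cB]
      rw [ih (d+1) t (by omega)]
      by_cases h : tdE B = tk B <;> simp only [h, if_true, if_false, if_pos, if_neg] <;> omega

/-- tail classification -/
inductive Tail
  | free : ℕ → ℕ → Tail
  | cycB : Tail
  | cycF : ℕ → Tail
  deriving DecidableEq

def tailOf (A : Ty) : Tail :=
  if tdE A < tk A then (if 1 ≤ cB A then .cycB else .cycF (tb A)) else .free (tdE A - tk A) (tb A)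

def Tail.bump : Tail → Tail
  | .free n b => .free n (b+1) | .cycB => .cycB | .cycF b => .cycF (b+1)

def Tail.muOp : Tail → Tail
  | .free 0 b => if b = 0 then .cycF 0 else .cycB
  | .free (n+1) b => .free n b
  | t => t

/-- combine a tail prefix with `b` boxes ending in a spliced tail -/
def Tail.comb (b : ℕ) : Tail → Tail
  | .free n' b' => .free n' (b + b') | .cycB => .cycB | .cycF b' => .cycF (b + b')

def Tail.splice (t : Tail) (σ : ℕ → Ty) : Tail :=
  match t with
  | .free n b => Tail.comb b (tailOf (σ n))
  | t => t

lemma Tail.comb_zero (t : Tail) : Tail.comb 0 t = t := by cases t <;> simp [Tail.comb]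

lemma Tail.bump_comb (b : ℕ) (t : Tail) : (Tail.comb b t).bump = Tail.comb (b+1) t := by
  cases t <;> simp [Tail.comb, Tail.bump] <;> omega

lemma tail_var (j : ℕ) : tailOf (Ty.var j) = Tail.free j 0 := by
  unfold tailOf; simp [tk, tdE, tb, cB]

lemma isTV_iff_cycB (A : Ty) : IsTV A ↔ tailOf A = .cycB := by
  unfold IsTV tailOf
  rw [tv_char A 0 0 le_rfl]
  by_cases h1 : tdE A < tk A
  · by_cases h2 : 1 ≤ cB A
    · rw [if_pos h1, if_pos h2]
      exact ⟨fun _ => rfl, fun _ => Or.inl ⟨h1, h2⟩⟩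
    · rw [if_pos h1, if_neg h2]
      constructor
      · rintro (⟨_, hh⟩ | ⟨hh, _⟩)
        · exact absurd hh h2
        · omega
      · intro hh; exact absurd hh (by simp)
  · rw [if_neg h1]
    constructor
    · rintro (⟨hh, _⟩ | ⟨_, hh, _⟩)
      · exact absurd hh h1
      · omega
    · intro hh; exact absurd hh (by simp)

lemma tail_box (A : Ty) : tailOf (box A) = (tailOf A).bump := by
  unfold tailOf
  simp only [tk, tdE, tb, cB]
  by_cases h1 : tdE A < tk A
  · by_cases h2 : 1 ≤ cB A <;> simp [h1, h2, Tail.bump]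
  · simp [h1, Tail.bump]

lemma tail_arrow (A B : Ty) : tailOf (arrow A B) = tailOf B := by
  unfold tailOf; simp only [tk, tdE, tb, cB]; rfl

lemma tail_mu (A : Ty) : tailOf (mu A) = (tailOf A).muOp := by
  unfold tailOf
  simp only [tk, tdE, tb, cB]
  by_cases h1 : tdE A < tk A
  · have h1' : tdE A < tk A + 1 := by omega
    have h2 : ¬ (tdE A = tk A) := by omega
    by_cases h3 : 1 ≤ cB A <;> simp [h1, h1', h2, h3, Tail.muOp]
  · by_cases h2 : tdE A = tk A
    · have h1' : tdE A < tk A + 1 := by omega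
      have h4 : tdE A - tk A = 0 := by omega
      by_cases h3 : 1 ≤ tb A
      · have h5 : ¬ (tb A = 0) := by omega
        simp [h1, h1', h2, h3, h4, h5, Tail.muOp]
      · have : tb A = 0 := by omega
        simp [h1, h1', h2, h3, h4, this, Tail.muOp]
    · have h1' : ¬ (tdE A < tk A + 1) := by omega
      have h4 : tdE A - tk A = (tdE A - (tk A + 1)) + 1 := by omega
      simp [h1, h1', Tail.muOp, h4]

/-- data of a renamed type -/
lemma td_rename : ∀ (A : Ty) (f : ℕ → ℕ),
    tk (rename f A) = tk A ∧ tb (rename f A) = tb A ∧ cB (rename f A) = cB A ∧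
      tdE (rename f A) = (if tdE A < tk A then tdE A else f (tdE A - tk A) + tk A) := by
  intro A
  induction A with
  | var j => intro f; simp [rename, tk, tb, cB, tdE]
  | arrow B C _ ihC => intro f; exact ihC f
  | box B ih => intro f; obtain ⟨h1, h2, h3, h4⟩ := ih f; exact ⟨h1, congrArg (· + 1) h2, h3, h4⟩
  | mu B ih =>
      intro f
      obtain ⟨h1, h2, h3, h4⟩ := ih (upr f)
      rw [rename_def_mu]
      simp only [tk, tb, cB, tdE]
      refine ⟨by omega, by omega, ?_, ?_⟩
      · by_cases h : tdE B = tk B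
        · have h' : ¬ (tdE B < tk B) := by omega
          have hval : tdE (rename (upr f) B) = tk B := by
            rw [h4]; simp [h', h, upr]
          have hc : tdE (rename (upr f) B) = tk (rename (upr f) B) := by rw [hval, h1]
          rw [if_pos hc, if_pos h, h2]
        · by_cases h' : tdE B < tk B
          · have : tdE (rename (upr f) B) = tdE B := by rw [h4]; simp [h']
            simp [this, h1, h3, h, show ¬ (tdE B = tk B) from h]
          · have h5 : tdE (rename (upr f) B) = upr f (tdE B - tk B) + tk B := by
              rw [h4]; simp [h']
            have h6 : ∃ m, tdE B - tk B = m + 1 := ⟨tdE B - tk B - 1, by omega⟩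
            obtain ⟨m, hm⟩ := h6
            have : tdE (rename (upr f) B) = f m + 1 + tk B := by rw [h5, hm]; rfl
            have hne : ¬ (tdE (rename (upr f) B) = tk (rename (upr f) B)) := by
              rw [this, h1]; omega
            simp [hne, h3, show ¬ (tdE B = tk B) from h]
      · by_cases h' : tdE B < tk B
        · have : tdE (rename (upr f) B) = tdE B := by rw [h4]; simp [h']
          simp [this, h1, show tdE B < tk B + 1 from by omega, h']
        · by_cases h : tdE B = tk B
          · have : tdE (rename (upr f) B) = tk B := by
              rw [h4]; simp [h', h, upr]
            simp [this, h1, h, show tk B < tk B + 1 from by omega]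
          · have h5 : tdE (rename (upr f) B) = upr f (tdE B - tk B) + tk B := by
              rw [h4]; simp [h']
            obtain ⟨m, hm⟩ : ∃ m, tdE B - tk B = m + 1 := ⟨tdE B - tk B - 1, by omega⟩
            have h7 : tdE (rename (upr f) B) = f m + 1 + tk B := by rw [h5, hm]; rfl
            have hx : ¬ (tdE B < tk B + 1) := by omega
            simp only [h7, hx, if_false, show tdE B - (tk B + 1) = m from by omega]
            omega
          

lemma tail_rename (A : Ty) (f : ℕ → ℕ) :
    tailOf (rename f A) = (match tailOf A with
      | .free n b => .free (f n) b
      | t => t) := by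
  obtain ⟨h1, h2, h3, h4⟩ := td_rename A f
  unfold tailOf
  by_cases h : tdE A < tk A
  · have : tdE (rename f A) < tk (rename f A) := by rw [h1, h4]; simp [h]
    by_cases h5 : 1 ≤ cB A <;> simp [h, h5, this, h3, h2]
  · have hcc : ¬ (tdE (rename f A) < tk (rename f A)) := by
      rw [h1, h4, if_neg h]; omega
    rw [if_neg h, if_neg hcc, h2, h1, h4, if_neg h]
    simp

lemma isTV_rename (A : Ty) (f : ℕ → ℕ) : IsTV (rename f A) ↔ IsTV A := by
  rw [isTV_iff_cycB, isTV_iff_cycB, tail_rename]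
  cases tailOf A <;> simp

lemma tail_shiftUp (A : Ty) :
    tailOf (shiftUp A) = (match tailOf A with | .free n b => .free (n+1) b | t => t) := by
  unfold shiftUp; rw [tail_rename]

/-- the splice lemma: tail of a substituted type -/
lemma tail_subst : ∀ (A : Ty) (σ : ℕ → Ty), tailOf (subst σ A) = (tailOf A).splice σ := by
  intro A
  induction A with
  | var j =>
      intro σ
      show tailOf (σ j) = (tailOf (Ty.var j)).splice σ
      rw [tail_var]
      show tailOf (σ j) = Tail.comb 0 (tailOf (σ j))
      rw [Tail.comb_zero]
  | arrow B C _ ihC =>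
      intro σ
      show tailOf (arrow (subst σ B) (subst σ C)) = _
      rw [tail_arrow, tail_arrow, ihC]
  | box B ih =>
      intro σ
      show tailOf (box (subst σ B)) = _
      rw [tail_box, tail_box, ih]
      cases h : tailOf B with
      | free n b =>
          show (Tail.comb b (tailOf (σ n))).bump = Tail.comb (b+1) (tailOf (σ n))
          exact Tail.bump_comb _ _
      | cycB => rfl
      | cycF b => rfl
  | mu B ih =>
      intro σ
      rw [subst_def_mu, tail_mu, tail_mu, ih]
      cases h : tailOf B with
      | free n b =>
          cases n with
          | zero =>
              have : tailOf (ups σ 0) = Tail.free 0 0 := by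
                show tailOf (Ty.var 0) = _
                unfold tailOf; simp [tk, tdE, tb, cB]
              simp only [Tail.splice, this, Tail.comb, Nat.add_zero]
              cases hb : (Tail.free 0 b).muOp <;> simp [Tail.muOp] at hb ⊢ <;>
                first
                  | (split at hb <;> simp_all [Tail.splice])
                  | simp_all [Tail.splice]
          | succ m =>
              have hsh : tailOf (ups σ (m+1)) = (match tailOf (σ m) with
                  | .free n' b' => .free (n'+1) b' | t => t) := by
                show tailOf (shiftUp (σ m)) = _
                exact tail_shiftUp (σ m)
              simp only [Tail.splice, hsh]
              cases h2 : tailOf (σ m) <;> simp [h2, Tail.comb, Tail.muOp]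
      | cycB => simp [Tail.splice, Tail.muOp]
      | cycF b => simp [Tail.splice, Tail.muOp]



/-! ## Section 3: junk depth (jb) and variable occurrence depth (jbOcc) -/

lemma isTV_box (A : Ty) : IsTV (Ty.box A) ↔ IsTV A := Iff.rfl
lemma isTV_arrow (A B : Ty) : IsTV (Ty.arrow A B) ↔ IsTV B := Iff.rfl
lemma not_isTV_var (j : ℕ) : ¬ IsTV (Ty.var j) := by
  simp [IsTV, tvAux]

instance (A : Ty) : Decidable (IsTV A) := inferInstanceAs (Decidable (tvAux A 0 0 = true))
noncomputable instance (A : Ty) (n : ℕ) : Decidable (Proper A n) := Classical.propDecidable _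

noncomputable def jb : Ty → ℕ∞
  | .var _ => ⊤
  | .box A => if IsTV A then ⊤ else 1 + jb A
  | .arrow A B => if IsTV B then ⊤ else min (jb A) (jb B)
  | .mu A => if IsTV (Ty.mu A) then ⊤ else if Proper A 0 then jb A else 0

noncomputable def jbOcc : Ty → ℕ → ℕ∞
  | .var m, n => if m = n then 0 else ⊤
  | .box A, n => if IsTV A then ⊤ else 1 + jbOcc A n
  | .arrow A B, n => if IsTV B then ⊤ else min (jbOcc A n) (jbOcc B n)
  | .mu A, n => if IsTV (Ty.mu A) then ⊤ else jbOcc A (n+1)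

lemma enat_one_le_one_add (x : ℕ∞) : (1:ℕ∞) ≤ 1 + x := le_self_add

lemma proper_iff_jbOcc : ∀ (A : Ty) (X : ℕ), Proper A X ↔ 1 ≤ jbOcc A X := by
  intro A
  induction A with
  | var n =>
      intro X
      show (n ≠ X) ↔ _
      simp only [jbOcc]
      by_cases h : n = X <;> simp [h]
  | box B ih =>
      intro X
      show True ↔ _
      simp only [jbOcc]
      by_cases h : IsTV B <;> simp [h, enat_one_le_one_add]
  | arrow B C ihB ihC =>
      intro X
      show (Proper B X ∧ Proper C X) ∨ IsTV C ↔ _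
      simp only [jbOcc]
      by_cases h : IsTV C
      · simp [h]
      · simp [h, le_min_iff, ihB, ihC]
  | mu B ih =>
      intro X
      show Proper B (X+1) ∨ IsTV (Ty.mu B) ↔ _
      simp only [jbOcc]
      by_cases h : IsTV (Ty.mu B)
      · simp [h]
      · simp [h, ih]

lemma jb_top_of_tv {A : Ty} (h : IsTV A) : jb A = ⊤ := by
  cases A with
  | var j => rfl
  | box B => simp only [jb]; rw [if_pos ((isTV_box B).1 h)]
  | arrow B C => simp only [jb]; rw [if_pos ((isTV_arrow B C).1 h)]
  | mu B => simp only [jb]; rw [if_pos h]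

lemma jbOcc_top_of_tv {A : Ty} (h : IsTV A) (n : ℕ) : jbOcc A n = ⊤ := by
  cases A with
  | var j => exact absurd h (not_isTV_var j)
  | box B => simp only [jbOcc]; rw [if_pos ((isTV_box B).1 h)]
  | arrow B C => simp only [jbOcc]; rw [if_pos ((isTV_arrow B C).1 h)]
  | mu B => simp only [jbOcc]; rw [if_pos h]

lemma upr_inj {f : ℕ → ℕ} (hf : Function.Injective f) : Function.Injective (Ty.upr f) := by
  intro a b hab
  cases a with
  | zero => cases b with
    | zero => rfl
    | succ m => simp [Ty.upr] at hab
  | succ m => cases b with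
    | zero => simp [Ty.upr] at hab
    | succ m' => simp only [Ty.upr] at hab; exact congrArg Nat.succ (hf (by omega))

lemma isTV_mu_rename (B : Ty) (f : ℕ → ℕ) :
    IsTV (Ty.mu (Ty.rename (Ty.upr f) B)) ↔ IsTV (Ty.mu B) := by
  rw [← Ty.rename_def_mu, isTV_rename]

lemma jbOcc_rename_inj : ∀ (A : Ty) {f : ℕ → ℕ}, Function.Injective f → ∀ n,
    jbOcc (Ty.rename f A) (f n) = jbOcc A n := by
  intro A
  induction A with
  | var j =>
      intro f hf n
      show (if f j = f n then (0:ℕ∞) else ⊤) = (if j = n then (0:ℕ∞) else ⊤)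
      by_cases h : j = n
      · rw [if_pos (by rw [h]), if_pos h]
      · rw [if_neg (fun hc => h (hf hc)), if_neg h]
  | box B ih =>
      intro f hf n
      show (if IsTV (Ty.rename f B) then ⊤ else 1 + jbOcc (Ty.rename f B) (f n))
        = (if IsTV B then ⊤ else 1 + jbOcc B n)
      by_cases h : IsTV B
      · rw [if_pos ((isTV_rename B f).2 h), if_pos h]
      · rw [if_neg (fun hc => h ((isTV_rename B f).1 hc)), if_neg h, ih hf n]
  | arrow B C ihB ihC =>
      intro f hf n
      show (if IsTV (Ty.rename f C) then ⊤ else min (jbOcc (Ty.rename f B) (f n)) (jbOcc (Ty.rename f C) (f n)))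
        = (if IsTV C then ⊤ else min (jbOcc B n) (jbOcc C n))
      by_cases h : IsTV C
      · rw [if_pos ((isTV_rename C f).2 h), if_pos h]
      · rw [if_neg (fun hc => h ((isTV_rename C f).1 hc)), if_neg h, ihB hf n, ihC hf n]
  | mu B ih =>
      intro f hf n
      rw [Ty.rename_def_mu]
      show (if IsTV (Ty.mu (Ty.rename (Ty.upr f) B)) then ⊤ else jbOcc (Ty.rename (Ty.upr f) B) (f n + 1))
        = (if IsTV (Ty.mu B) then ⊤ else jbOcc B (n+1))
      by_cases h : IsTV (Ty.mu B)
      · rw [if_pos ((isTV_mu_rename B f).2 h), if_pos h]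
      · rw [if_neg (fun hc => h ((isTV_mu_rename B f).1 hc)), if_neg h]
        have heq : f n + 1 = Ty.upr f (n+1) := rfl
        rw [heq, ih (upr_inj hf) (n+1)]

lemma jbOcc_rename_notin : ∀ (A : Ty) {f : ℕ → ℕ} {m : ℕ}, (∀ n, f n ≠ m) →
    jbOcc (Ty.rename f A) m = ⊤ := by
  intro A
  induction A with
  | var j =>
      intro f m hf
      show (if f j = m then (0:ℕ∞) else ⊤) = ⊤
      rw [if_neg (hf j)]
  | box B ih =>
      intro f m hf
      show (if IsTV (Ty.rename f B) then ⊤ else 1 + jbOcc (Ty.rename f B) m) = ⊤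
      by_cases h : IsTV (Ty.rename f B)
      · rw [if_pos h]
      · rw [if_neg h, ih hf]; rfl
  | arrow B C ihB ihC =>
      intro f m hf
      show (if IsTV (Ty.rename f C) then ⊤ else min (jbOcc (Ty.rename f B) m) (jbOcc (Ty.rename f C) m)) = ⊤
      by_cases h : IsTV (Ty.rename f C)
      · rw [if_pos h]
      · rw [if_neg h, ihB hf, ihC hf]; simp
  | mu B ih =>
      intro f m hf
      rw [Ty.rename_def_mu]
      show (if IsTV (Ty.mu (Ty.rename (Ty.upr f) B)) then ⊤ else jbOcc (Ty.rename (Ty.upr f) B) (m+1)) = ⊤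
      by_cases h : IsTV (Ty.mu (Ty.rename (Ty.upr f) B))
      · rw [if_pos h]
      · rw [if_neg h, ih (f := Ty.upr f) (m := m+1)]
        intro n
        cases n with
        | zero => simp [Ty.upr]
        | succ l => simpa [Ty.upr] using fun hc => hf l (by omega)

lemma proper_rename_iff (A : Ty) {f : ℕ → ℕ} (hf : Function.Injective f) (n : ℕ) :
    Proper (Ty.rename f A) (f n) ↔ Proper A n := by
  rw [proper_iff_jbOcc, proper_iff_jbOcc, jbOcc_rename_inj A hf n]

lemma jb_rename : ∀ (A : Ty) {f : ℕ → ℕ}, Function.Injective f → jb (Ty.rename f A) = jb A := by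
  intro A
  induction A with
  | var j => intro f hf; rfl
  | box B ih =>
      intro f hf
      show (if IsTV (Ty.rename f B) then ⊤ else 1 + jb (Ty.rename f B)) = (if IsTV B then ⊤ else 1 + jb B)
      by_cases h : IsTV B
      · rw [if_pos ((isTV_rename B f).2 h), if_pos h]
      · rw [if_neg (fun hc => h ((isTV_rename B f).1 hc)), if_neg h, ih hf]
  | arrow B C ihB ihC =>
      intro f hf
      show (if IsTV (Ty.rename f C) then ⊤ else min (jb (Ty.rename f B)) (jb (Ty.rename f C)))
        = (if IsTV C then ⊤ else min (jb B) (jb C))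
      by_cases h : IsTV C
      · rw [if_pos ((isTV_rename C f).2 h), if_pos h]
      · rw [if_neg (fun hc => h ((isTV_rename C f).1 hc)), if_neg h, ihB hf, ihC hf]
  | mu B ih =>
      intro f hf
      rw [Ty.rename_def_mu]
      show (if IsTV (Ty.mu (Ty.rename (Ty.upr f) B)) then ⊤ else
          if Proper (Ty.rename (Ty.upr f) B) 0 then jb (Ty.rename (Ty.upr f) B) else 0)
        = (if IsTV (Ty.mu B) then ⊤ else if Proper B 0 then jb B else 0)
      have hprop : Proper (Ty.rename (Ty.upr f) B) 0 ↔ Proper B 0 := by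
        have := proper_rename_iff B (upr_inj hf) 0
        simpa [Ty.upr] using this
      by_cases h : IsTV (Ty.mu B)
      · rw [if_pos ((isTV_mu_rename B f).2 h), if_pos h]
      · rw [if_neg (fun hc => h ((isTV_mu_rename B f).1 hc)), if_neg h]
        by_cases h2 : Proper B 0
        · rw [if_pos (hprop.2 h2), if_pos h2, ih (upr_inj hf)]
        · rw [if_neg (fun hc => h2 (hprop.1 hc)), if_neg h2]

/-! ## Section 3b: substitution lemmas -/

lemma Tail.comb_eq_cycB {b : ℕ} {t : Tail} : Tail.comb b t = Tail.cycB ↔ t = Tail.cycB := by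
  cases t <;> simp [Tail.comb]

lemma isTV_subst_iff (A : Ty) (σ : ℕ → Ty) :
    IsTV (Ty.subst σ A) ↔ IsTV A ∨ ∃ n b, tailOf A = .free n b ∧ IsTV (σ n) := by
  rw [isTV_iff_cycB, tail_subst]
  cases h : tailOf A with
  | free n b =>
      simp only [Tail.splice, Tail.comb_eq_cycB, ← isTV_iff_cycB]
      constructor
      · intro hh; exact Or.inr ⟨n, b, rfl, hh⟩
      · rintro ((hh : IsTV A) | ⟨n', b', he, hh⟩)
        · rw [isTV_iff_cycB, h] at hh; exact absurd hh (by simp)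
        · injection he with e1 e2
          subst e1
          exact hh
  | cycB =>
      simp only [Tail.splice]
      constructor
      · intro _; exact Or.inl ((isTV_iff_cycB A).2 h)
      · intro _; trivial

  | cycF b =>
      simp only [Tail.splice]
      constructor
      · intro hh; cases hh
      · rintro ((hh : IsTV A) | ⟨n', b', he, hh⟩)
        · rw [isTV_iff_cycB, h] at hh; exact absurd hh (by simp)
        · exact absurd he (by simp)

lemma isTV_subst_mono {A : Ty} (σ : ℕ → Ty) (h : IsTV A) : IsTV (Ty.subst σ A) :=
  (isTV_subst_iff A σ).2 (Or.inl h)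

lemma isTV_subst_guard {A : Ty} {σ : ℕ → Ty} (hg : ∀ n, ¬ IsTV (σ n)) :
    IsTV (Ty.subst σ A) ↔ IsTV A := by
  rw [isTV_subst_iff]
  constructor
  · rintro (h | ⟨n, b, _, h⟩)
    · exact h
    · exact absurd h (hg n)
  · exact Or.inl

lemma guard_ups {σ : ℕ → Ty} (hg : ∀ n, ¬ IsTV (σ n)) : ∀ n, ¬ IsTV (Ty.ups σ n) := by
  intro n
  cases n with
  | zero => exact not_isTV_var 0
  | succ m =>
      show ¬ IsTV (Ty.shiftUp (σ m))
      unfold Ty.shiftUp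
      rw [isTV_rename]
      exact hg m

lemma jbOcc_subst_low : ∀ (A : Ty) (σ : ℕ → Ty) (j : ℕ),
    (∀ n, ¬ IsTV (σ n)) → σ j = .var j → (∀ n, n ≠ j → jbOcc (σ n) j = ⊤) →
    jbOcc (Ty.subst σ A) j = jbOcc A j := by
  intro A
  induction A with
  | var m =>
      intro σ j hg hj hne
      show jbOcc (σ m) j = (if m = j then (0:ℕ∞) else ⊤)
      by_cases h : m = j
      · subst h; rw [hj]; simp [jbOcc]
      · rw [hne m h, if_neg h]
  | box B ih =>
      intro σ j hg hj hne
      show (if IsTV (Ty.subst σ B) then ⊤ else 1 + jbOcc (Ty.subst σ B) j)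
        = (if IsTV B then ⊤ else 1 + jbOcc B j)
      by_cases h : IsTV B
      · rw [if_pos (isTV_subst_mono σ h), if_pos h]
      · rw [if_neg (fun hc => h ((isTV_subst_guard hg).1 hc)), if_neg h, ih σ j hg hj hne]
  | arrow B C ihB ihC =>
      intro σ j hg hj hne
      show (if IsTV (Ty.subst σ C) then ⊤ else min (jbOcc (Ty.subst σ B) j) (jbOcc (Ty.subst σ C) j))
        = (if IsTV C then ⊤ else min (jbOcc B j) (jbOcc C j))
      by_cases h : IsTV C
      · rw [if_pos (isTV_subst_mono σ h), if_pos h]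
      · rw [if_neg (fun hc => h ((isTV_subst_guard hg).1 hc)), if_neg h,
          ihB σ j hg hj hne, ihC σ j hg hj hne]
  | mu B ih =>
      intro σ j hg hj hne
      rw [Ty.subst_def_mu]
      show (if IsTV (Ty.mu (Ty.subst (Ty.ups σ) B)) then ⊤ else jbOcc (Ty.subst (Ty.ups σ) B) (j+1))
        = (if IsTV (Ty.mu B) then ⊤ else jbOcc B (j+1))
      have htv : IsTV (Ty.mu (Ty.subst (Ty.ups σ) B)) ↔ IsTV (Ty.mu B) := by
        rw [← Ty.subst_def_mu]
        exact isTV_subst_guard hg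
      by_cases h : IsTV (Ty.mu B)
      · rw [if_pos (htv.2 h), if_pos h]
      · rw [if_neg (fun hc => h (htv.1 hc)), if_neg h]
        refine ih (Ty.ups σ) (j+1) (guard_ups hg) ?_ ?_
        · show Ty.shiftUp (σ j) = Ty.var (j+1)
          rw [hj]; rfl
        · intro n hn
          cases n with
          | zero =>
              show jbOcc (Ty.var 0) (j+1) = ⊤
              simp [jbOcc]
          | succ m =>
              show jbOcc (Ty.shiftUp (σ m)) (j+1) = ⊤
              unfold Ty.shiftUp
              have heq : (j + 1) = Nat.succ j := rfl
              rw [heq, jbOcc_rename_inj (σ m) Nat.succ_injective j]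
              exact hne m (by omega)

/-- the substitution used by `openT` at binder depth `k` -/
def sopen (k : ℕ) (B : Ty) : ℕ → Ty := fun n =>
  if n < k then .var n else if n = k then Ty.rename (fun i => i + k) B else .var (n - 1)

lemma rename_id (A : Ty) : Ty.rename (fun n => n) A = A := by
  rw [Ty.rename_eq_subst]
  have : ∀ n, (fun n => Ty.var n) n = Ty.var n := fun _ => rfl
  rw [Ty.subst_ext (σ := fun n => Ty.var n) (τ := Ty.var) (fun _ => rfl), Ty.subst_var]

lemma sopen_zero_eq (A B : Ty) :
    openT A B = Ty.subst (sopen 0 B) A := by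
  unfold openT
  apply Ty.subst_ext
  intro n
  cases n with
  | zero =>
      show B = sopen 0 B 0
      have h0 : sopen 0 B 0 = Ty.rename (fun i => i + 0) B := by simp [sopen]
      rw [h0, show (fun i : ℕ => i + 0) = (fun i : ℕ => i) from funext (fun i => by omega), rename_id]
  | succ m =>
      show Ty.var m = sopen 0 B (m+1)
      simp only [sopen, if_neg (by omega : ¬ (m+1:ℕ) < 0), if_neg (by omega : ¬ m+1 = 0)]
      rfl

lemma ups_sopen (k : ℕ) (B : Ty) : ∀ n, Ty.ups (sopen k B) n = sopen (k+1) B n := by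
  intro n
  cases n with
  | zero =>
      show Ty.var 0 = _
      simp [sopen]
  | succ m =>
      show Ty.shiftUp (sopen k B m) = _
      by_cases h1 : m < k
      · simp only [sopen, if_pos h1, if_pos (show m+1 < k+1 by omega)]
        rfl
      · by_cases h2 : m = k
        · simp only [sopen, if_neg h1, if_pos h2, if_neg (show ¬ m+1 < k+1 by omega),
            if_pos (show m+1 = k+1 by omega)]
          unfold Ty.shiftUp
          rw [Ty.rename_rename]
          apply Ty.rename_ext
          intro i; omega
        · simp only [sopen, if_neg h1, if_neg h2, if_neg (show ¬ m+1 < k+1 by omega),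
            if_neg (show ¬ m+1 = k+1 by omega)]
          show Ty.shiftUp (Ty.var (m-1)) = Ty.var (m+1-1)
          unfold Ty.shiftUp
          show Ty.var (m-1+1) = Ty.var (m+1-1)
          congr 1
          omega

lemma subst_sopen_mu (k : ℕ) (B A : Ty) :
    Ty.subst (sopen k B) (Ty.mu A) = Ty.mu (Ty.subst (sopen (k+1) B) A) := by
  rw [Ty.subst_def_mu]
  congr 1
  exact Ty.subst_ext (ups_sopen k B) A

lemma guard_sopen {B : Ty} (hB : ¬ IsTV B) (k : ℕ) : ∀ n, ¬ IsTV (sopen k B n) := by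
  intro n
  unfold sopen
  by_cases h1 : n < k
  · rw [if_pos h1]; exact not_isTV_var n
  · by_cases h2 : n = k
    · rw [if_neg h1, if_pos h2, isTV_rename]; exact hB
    · rw [if_neg h1, if_neg h2]; exact not_isTV_var _

lemma add_right_inj_nat (k : ℕ) : Function.Injective (fun i : ℕ => i + k) := by
  intro a b h
  have : a + k = b + k := h
  omega

lemma jbOcc_rename_add_low (B : Ty) (k m : ℕ) (h : m < k) :
    jbOcc (Ty.rename (fun i => i + k) B) m = ⊤ :=
  jbOcc_rename_notin B (fun n hn => by
    have : n + k = m := hn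
    omega)

lemma jbOcc_rename_add_high (B : Ty) (k m : ℕ) (h : k ≤ m) :
    jbOcc (Ty.rename (fun i => i + k) B) m = jbOcc B (m - k) := by
  have h2 := jbOcc_rename_inj B (add_right_inj_nat k) (m - k)
  simpa [show m - k + k = m by omega] using h2

lemma jbOcc_sopen_low {B : Ty} (hB : ¬ IsTV B) (A : Ty) (k m : ℕ) (h : m < k) :
    jbOcc (Ty.subst (sopen k B) A) m = jbOcc A m := by
  apply jbOcc_subst_low A _ m (guard_sopen hB k)
  · simp [sopen, h]
  · intro n hn
    unfold sopen
    by_cases h1 : n < k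
    · rw [if_pos h1]
      show (if n = m then (0:ℕ∞) else ⊤) = ⊤
      rw [if_neg hn]
    · by_cases h2 : n = k
      · rw [if_neg h1, if_pos h2]
        exact jbOcc_rename_add_low B k m h
      · rw [if_neg h1, if_neg h2]
        show (if n - 1 = m then (0:ℕ∞) else ⊤) = ⊤
        rw [if_neg (by omega)]

/-! ## Section 3c: jb of openT, unfold lemmas, WF preservation -/

lemma enat_add_min (c a b : ℕ∞) : c + min a b = min (c + a) (c + b) := by
  rcases le_total a b with h | h
  · rw [min_eq_left h, min_eq_left (add_le_add_right h c)]
  · rw [min_eq_right h, min_eq_right (add_le_add_right h c)]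

lemma enat_min_add (a b c : ℕ∞) : min a b + c = min (a + c) (b + c) := by
  rcases le_total a b with h | h
  · rw [min_eq_left h, min_eq_left (add_le_add_left h c)]
  · rw [min_eq_right h, min_eq_right (add_le_add_left h c)]

lemma isTV_sopen_mu (B A : Ty) (k : ℕ) (hB : ¬ IsTV B) :
    IsTV (Ty.mu (Ty.subst (sopen (k+1) B) A)) ↔ IsTV (Ty.mu A) := by
  rw [← subst_sopen_mu]
  exact isTV_subst_guard (guard_sopen hB k)

lemma jbOcc_sopen_high {B : Ty} (hB : ¬ IsTV B) : ∀ (A : Ty) (k m : ℕ), k ≤ m →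
    jbOcc (Ty.subst (sopen k B) A) m = min (jbOcc A (m+1)) (jbOcc A k + jbOcc B (m - k)) := by
  intro A
  induction A with
  | var n =>
      intro k m hkm
      show jbOcc (sopen k B n) m = min (jbOcc (Ty.var n) (m+1)) (jbOcc (Ty.var n) k + jbOcc B (m - k))
      have hv : ∀ a c : ℕ, jbOcc (Ty.var a) c = if a = c then (0:ℕ∞) else ⊤ := fun a c => rfl
      unfold sopen
      by_cases h1 : n < k
      · rw [if_pos h1, hv, hv, hv, if_neg (by omega), if_neg (by omega), if_neg (by omega)]
        simp
      · by_cases h2 : n = k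
        · rw [if_neg h1, if_pos h2, jbOcc_rename_add_high B k m hkm, hv, hv,
            if_neg (by omega), if_pos h2]
          simp
        · rw [if_neg h1, if_neg h2, hv, hv, hv, if_neg (show ¬ n = k from h2)]
          by_cases h3 : n - 1 = m
          · rw [if_pos h3, if_pos (show n = m + 1 by omega)]
            simp
          · rw [if_neg h3, if_neg (show ¬ n = m + 1 by omega)]
            simp
  | box C ih =>
      intro k m hkm
      show (if IsTV (Ty.subst (sopen k B) C) then ⊤ else 1 + jbOcc (Ty.subst (sopen k B) C) m) = _
      have hCt : IsTV (Ty.subst (sopen k B) C) ↔ IsTV C := isTV_subst_guard (guard_sopen hB k)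
      have hv : ∀ c, jbOcc (Ty.box C) c = if IsTV C then ⊤ else 1 + jbOcc C c := fun c => rfl
      by_cases h : IsTV C
      · rw [if_pos (hCt.2 h), hv, hv, if_pos h, if_pos h]
        simp
      · rw [if_neg (fun hc => h (hCt.1 hc)), hv, hv, if_neg h, if_neg h, ih k m hkm,
          enat_add_min, add_assoc]
  | arrow C D ihC ihD =>
      intro k m hkm
      show (if IsTV (Ty.subst (sopen k B) D) then ⊤
          else min (jbOcc (Ty.subst (sopen k B) C) m) (jbOcc (Ty.subst (sopen k B) D) m)) = _
      have hDt : IsTV (Ty.subst (sopen k B) D) ↔ IsTV D := isTV_subst_guard (guard_sopen hB k)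
      have hv : ∀ c, jbOcc (Ty.arrow C D) c = if IsTV D then ⊤ else min (jbOcc C c) (jbOcc D c) :=
        fun c => rfl
      by_cases h : IsTV D
      · rw [if_pos (hDt.2 h), hv, hv, if_pos h, if_pos h]
        simp
      · rw [if_neg (fun hc => h (hDt.1 hc)), hv, hv, if_neg h, if_neg h, ihC k m hkm, ihD k m hkm,
          enat_min_add, min_min_min_comm]
  | mu C ih =>
      intro k m hkm
      rw [subst_sopen_mu]
      show (if IsTV (Ty.mu (Ty.subst (sopen (k+1) B) C)) then ⊤
          else jbOcc (Ty.subst (sopen (k+1) B) C) (m+1)) = _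
      have hv : ∀ c, jbOcc (Ty.mu C) c = if IsTV (Ty.mu C) then ⊤ else jbOcc C (c+1) := fun c => rfl
      by_cases h : IsTV (Ty.mu C)
      · rw [if_pos ((isTV_sopen_mu B C k hB).2 h), hv, hv, if_pos h, if_pos h]
        simp
      · rw [if_neg (fun hc => h ((isTV_sopen_mu B C k hB).1 hc)), hv, hv, if_neg h, if_neg h,
          ih (k+1) (m+1) (by omega), show m + 1 - (k+1) = m - k from by omega]

lemma jb_sopen {B : Ty} (hB : ¬ IsTV B) : ∀ (A : Ty) (k : ℕ),
    jb (Ty.subst (sopen k B) A) = min (jb A) (jbOcc A k + jb B) := by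
  intro A
  induction A with
  | var n =>
      intro k
      show jb (sopen k B n) = min (jb (Ty.var n)) (jbOcc (Ty.var n) k + jb B)
      have hv : jb (Ty.var n) = ⊤ := rfl
      have hocc : jbOcc (Ty.var n) k = if n = k then (0:ℕ∞) else ⊤ := rfl
      unfold sopen
      by_cases h1 : n < k
      · rw [if_pos h1, hv, hocc, if_neg (by omega)]
        simp
      · by_cases h2 : n = k
        · rw [if_neg h1, if_pos h2, jb_rename B (add_right_inj_nat k), hv, hocc, if_pos h2]
          simp
        · rw [if_neg h1, if_neg h2, hv, hocc, if_neg h2]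
          simp
          rfl
  | box C ih =>
      intro k
      show (if IsTV (Ty.subst (sopen k B) C) then ⊤ else 1 + jb (Ty.subst (sopen k B) C)) = _
      have hCt : IsTV (Ty.subst (sopen k B) C) ↔ IsTV C := isTV_subst_guard (guard_sopen hB k)
      have hj : jb (Ty.box C) = if IsTV C then ⊤ else 1 + jb C := rfl
      have ho : jbOcc (Ty.box C) k = if IsTV C then ⊤ else 1 + jbOcc C k := rfl
      by_cases h : IsTV C
      · rw [if_pos (hCt.2 h), hj, ho, if_pos h, if_pos h]
        simp
      · rw [if_neg (fun hc => h (hCt.1 hc)), hj, ho, if_neg h, if_neg h, ih k,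
          enat_add_min, add_assoc]
  | arrow C D ihC ihD =>
      intro k
      show (if IsTV (Ty.subst (sopen k B) D) then ⊤
          else min (jb (Ty.subst (sopen k B) C)) (jb (Ty.subst (sopen k B) D))) = _
      have hDt : IsTV (Ty.subst (sopen k B) D) ↔ IsTV D := isTV_subst_guard (guard_sopen hB k)
      have hj : jb (Ty.arrow C D) = if IsTV D then ⊤ else min (jb C) (jb D) := rfl
      have ho : jbOcc (Ty.arrow C D) k = if IsTV D then ⊤ else min (jbOcc C k) (jbOcc D k) := rfl
      by_cases h : IsTV D
      · rw [if_pos (hDt.2 h), hj, ho, if_pos h, if_pos h]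
        simp
      · rw [if_neg (fun hc => h (hDt.1 hc)), hj, ho, if_neg h, if_neg h, ihC k, ihD k,
          enat_min_add, min_min_min_comm]
  | mu C ih =>
      intro k
      rw [subst_sopen_mu]
      show (if IsTV (Ty.mu (Ty.subst (sopen (k+1) B) C)) then ⊤
          else if Proper (Ty.subst (sopen (k+1) B) C) 0 then jb (Ty.subst (sopen (k+1) B) C) else 0) = _
      have hj : jb (Ty.mu C) = if IsTV (Ty.mu C) then ⊤ else if Proper C 0 then jb C else 0 := rfl
      have ho : jbOcc (Ty.mu C) k = if IsTV (Ty.mu C) then ⊤ else jbOcc C (k+1) := rfl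
      have hprop : Proper (Ty.subst (sopen (k+1) B) C) 0 ↔ Proper C 0 := by
        rw [proper_iff_jbOcc, proper_iff_jbOcc, jbOcc_sopen_low hB C (k+1) 0 (by omega)]
      by_cases h : IsTV (Ty.mu C)
      · rw [if_pos ((isTV_sopen_mu B C k hB).2 h), hj, ho, if_pos h, if_pos h]
        simp
      · rw [if_neg (fun hc => h ((isTV_sopen_mu B C k hB).1 hc)), hj, ho, if_neg h, if_neg h]
        by_cases h2 : Proper C 0
        · rw [if_pos (hprop.2 h2), if_pos h2, ih (k+1)]
        · rw [if_neg (fun hc => h2 (hprop.1 hc)), if_neg h2]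
          rw [min_eq_left zero_le]

lemma sopen_zero_val (B : Ty) : sopen 0 B 0 = B := by
  have h0 : sopen 0 B 0 = Ty.rename (fun i => i + 0) B := by simp [sopen]
  rw [h0, show (fun i : ℕ => i + 0) = (fun i : ℕ => i) from funext (fun i => by omega), rename_id]

lemma sopen_zero_succ (B : Ty) (n : ℕ) : sopen 0 B (n+1) = Ty.var n := by
  simp [sopen]

lemma unfold_eq_subst (A : Ty) : unfoldMu A = Ty.subst (sopen 0 (Ty.mu A)) A :=
  sopen_zero_eq A (Ty.mu A)

lemma tail_open (A B : Ty) : tailOf (openT A B) =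
    (match tailOf A with
     | .free 0 b => Tail.comb b (tailOf B)
     | .free (n+1) b => .free n b
     | t => t) := by
  rw [sopen_zero_eq, tail_subst]
  cases h : tailOf A with
  | free n b =>
      cases n with
      | zero => simp only [Tail.splice, sopen_zero_val]
      | succ m =>
          simp only [Tail.splice, sopen_zero_succ, tail_var, Tail.comb, Nat.add_zero]
  | cycB => rfl
  | cycF b => rfl

lemma isTV_mu_char (A : Ty) :
    IsTV (Ty.mu A) ↔ tailOf A = .cycB ∨ ∃ b, tailOf A = .free 0 b ∧ b ≠ 0 := by
  rw [isTV_iff_cycB, tail_mu]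
  cases h : tailOf A with
  | free n b =>
      cases n with
      | zero =>
          by_cases hb : b = 0
          · subst hb; simp [Tail.muOp]
          · simp [Tail.muOp, hb]
      | succ m => simp [Tail.muOp]
  | cycB => simp [Tail.muOp]
  | cycF b => simp [Tail.muOp]

lemma isTV_unfold (A : Ty) : IsTV (unfoldMu A) ↔ IsTV (Ty.mu A) := by
  show IsTV (openT A (Ty.mu A)) ↔ _
  rw [isTV_iff_cycB, tail_open, isTV_iff_cycB]
  cases h : tailOf A with
  | free n b =>
      cases n with
      | zero =>
          rw [Tail.comb_eq_cycB]
      | succ m =>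
          rw [tail_mu, h]
          simp [Tail.muOp]
  | cycB =>
      rw [tail_mu, h]
      simp [Tail.muOp]
  | cycF b =>
      rw [tail_mu, h]
      simp [Tail.muOp]

lemma tail_fix (A : Ty) : tailOf (Ty.mu A) = tailOf (unfoldMu A) := by
  show _ = tailOf (openT A (Ty.mu A))
  rw [tail_open, tail_mu]
  cases h : tailOf A with
  | free n b =>
      cases n with
      | zero =>
          by_cases hb : b = 0
          · subst hb; simp [Tail.muOp, Tail.comb]
          · simp [Tail.muOp, hb, Tail.comb]
      | succ m => simp [Tail.muOp]
  | cycB => simp [Tail.muOp]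
  | cycF b => simp [Tail.muOp]

lemma enat_eq_zero_of_not_one_le {x : ℕ∞} (h : ¬ 1 ≤ x) : x = 0 := by
  rcases eq_or_ne x 0 with h0 | h0
  · exact h0
  · exact absurd (ENat.one_le_iff_ne_zero.2 h0) h

lemma jb_fix (A : Ty) : jb (Ty.mu A) = jb (unfoldMu A) := by
  by_cases htv : IsTV (Ty.mu A)
  · rw [jb_top_of_tv htv, jb_top_of_tv ((isTV_unfold A).2 htv)]
  · rw [unfold_eq_subst, jb_sopen htv A 0]
    have hj : jb (Ty.mu A) = if IsTV (Ty.mu A) then ⊤ else if Proper A 0 then jb A else 0 := rfl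
    by_cases hp : Proper A 0
    · rw [hj, if_neg htv, if_pos hp]
      exact (min_eq_left le_add_self).symm
    · have hocc : jbOcc A 0 = 0 := by
        apply enat_eq_zero_of_not_one_le
        rw [← proper_iff_jbOcc]
        exact hp
      rw [hj, if_neg htv, if_neg hp, hocc, zero_add]
      exact (min_eq_right zero_le).symm

lemma tail_free_occ : ∀ (A : Ty) (n b : ℕ), tailOf A = .free n b → jbOcc A n ≤ (b : ℕ∞) := by
  intro A
  induction A with
  | var j =>
      intro n b h
      rw [tail_var] at h
      injection h with e1 e2
      subst e1; subst e2
      show (if j = j then (0:ℕ∞) else ⊤) ≤ _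
      simp
  | box B ih =>
      intro n b h
      rw [tail_box] at h
      have hB : ¬ IsTV B := by
        intro hc
        rw [isTV_iff_cycB] at hc
        rw [hc] at h
        exact absurd h (by simp [Tail.bump])
      cases hT : tailOf B with
      | free n' b' =>
          rw [hT] at h
          simp only [Tail.bump] at h
          injection h with e1 e2
          show (if IsTV B then ⊤ else 1 + jbOcc B n) ≤ _
          rw [if_neg hB, ← e2, ← e1]
          calc (1:ℕ∞) + jbOcc B n' ≤ 1 + (b' : ℕ∞) := add_le_add_right (ih n' b' hT) 1
          _ = ((b' + 1 : ℕ) : ℕ∞) := by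
              rw [Nat.cast_add, Nat.cast_one, add_comm]
      | cycB => rw [hT] at h; exact absurd h (by simp [Tail.bump])
      | cycF b' => rw [hT] at h; exact absurd h (by simp [Tail.bump])
  | arrow B C ihB ihC =>
      intro n b h
      rw [tail_arrow] at h
      have hC : ¬ IsTV C := by
        intro hc
        rw [isTV_iff_cycB] at hc
        rw [hc] at h
        exact absurd h (by simp)
      show (if IsTV C then ⊤ else min (jbOcc B n) (jbOcc C n)) ≤ _
      rw [if_neg hC]
      exact le_trans (min_le_right _ _) (ihC n b h)
  | mu B ih =>
      intro n b h
      rw [tail_mu] at h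
      have htv : ¬ IsTV (Ty.mu B) := by
        intro hc
        rw [isTV_iff_cycB, tail_mu] at hc
        rw [hc] at h
        exact absurd h (by simp)
      have hB : tailOf B = .free (n+1) b := by
        cases hT : tailOf B with
        | free n' b' =>
            rw [hT] at h
            cases n' with
            | zero =>
                simp only [Tail.muOp] at h
                by_cases hb : b' = 0 <;> simp [hb] at h
            | succ m =>
                simp only [Tail.muOp] at h
                injection h with e1 e2
                subst e1; subst e2
                rfl
        | cycB => rw [hT] at h; exact absurd h (by simp [Tail.muOp])
        | cycF b' => rw [hT] at h; exact absurd h (by simp [Tail.muOp])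
      show (if IsTV (Ty.mu B) then ⊤ else jbOcc B (n+1)) ≤ _
      rw [if_neg htv]
      exact ih (n+1) b hB

/-! ### Proper / WF preservation -/

lemma not_free_proper : ∀ (A : Ty) (X : ℕ), ¬ freeInTy X A → Proper A X := by
  intro A
  induction A with
  | var n => intro X h; exact fun hc => h (by simp [freeInTy, hc])
  | box B _ => intro X _; trivial
  | arrow B C ihB ihC =>
      intro X h
      exact Or.inl ⟨ihB X (fun hc => h (Or.inl hc)), ihC X (fun hc => h (Or.inr hc))⟩
  | mu B ih =>
      intro X h
      exact Or.inl (ih (X+1) h)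

lemma not_free_rename : ∀ (A : Ty) {f : ℕ → ℕ} {X : ℕ}, (∀ n, f n ≠ X) →
    ¬ freeInTy X (Ty.rename f A) := by
  intro A
  induction A with
  | var n => intro f X hf hc; exact hf n hc
  | box B ih => intro f X hf hc; exact ih hf hc
  | arrow B C ihB ihC =>
      intro f X hf hc
      cases hc with
      | inl h => exact ihB hf h
      | inr h => exact ihC hf h
  | mu B ih =>
      intro f X hf hc
      refine ih (f := Ty.upr f) (X := X+1) ?_ hc
      intro n
      cases n with
      | zero => simp [Ty.upr]
      | succ m =>
          show f m + 1 ≠ X + 1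
          exact fun hh => hf m (by omega)

lemma proper_rename_cond : ∀ (A : Ty) {f : ℕ → ℕ} {Y Z : ℕ}, (∀ n, f n = Z → n = Y) →
    Proper A Y → Proper (Ty.rename f A) Z := by
  intro A
  induction A with
  | var n =>
      intro f Y Z hf h
      exact fun hc => h (hf n hc)
  | box B _ => intro f Y Z _ _; trivial
  | arrow B C ihB ihC =>
      intro f Y Z hf h
      cases h with
      | inl h => exact Or.inl ⟨ihB hf h.1, ihC hf h.2⟩
      | inr h => exact Or.inr ((isTV_rename C f).2 h)
  | mu B ih =>
      intro f Y Z hf h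
      cases h with
      | inl h =>
          refine Or.inl (ih (f := Ty.upr f) (Y := Y+1) (Z := Z+1) ?_ h)
          intro n hn
          cases n with
          | zero => simp [Ty.upr] at hn
          | succ m =>
              have : f m + 1 = Z + 1 := hn
              have := hf m (by omega)
              omega
      | inr h =>
          rw [Ty.rename_def_mu]
          exact Or.inr ((isTV_mu_rename B f).2 h)

lemma proper_subst : ∀ (A : Ty) {σ : ℕ → Ty} {X Y : ℕ}, Proper A X →
    (∀ n, n ≠ X → Proper (σ n) Y) → Proper (Ty.subst σ A) Y := by
  intro A
  induction A with
  | var n =>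
      intro σ X Y h hσ
      exact hσ n h
  | box B _ => intro σ X Y _ _; trivial
  | arrow B C ihB ihC =>
      intro σ X Y h hσ
      cases h with
      | inl h => exact Or.inl ⟨ihB h.1 hσ, ihC h.2 hσ⟩
      | inr h => exact Or.inr (isTV_subst_mono σ h)
  | mu B ih =>
      intro σ X Y h hσ
      cases h with
      | inl h =>
          refine Or.inl (ih (X := X+1) (Y := Y+1) h ?_)
          intro n hn
          cases n with
          | zero =>
              show Proper (Ty.var 0) (Y+1)
              exact fun hc => by omega
          | succ m =>
              show Proper (Ty.shiftUp (σ m)) (Y+1)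
              unfold Ty.shiftUp
              exact proper_rename_cond (σ m) (fun a ha => by omega) (hσ m (by omega))
      | inr h =>
          rw [Ty.subst_def_mu]
          refine Or.inr ?_
          rw [← Ty.subst_def_mu]
          exact isTV_subst_mono σ h

lemma wf_rename : ∀ (A : Ty) (f : ℕ → ℕ), WF A → WF (Ty.rename f A) := by
  intro A
  induction A with
  | var n => intro f _; trivial
  | box B ih => intro f h; exact ih f h
  | arrow B C ihB ihC => intro f h; exact ⟨ihB f h.1, ihC f h.2⟩
  | mu B ih =>
      intro f h
      refine ⟨ih (Ty.upr f) h.1, ?_⟩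
      exact proper_rename_cond B (fun n hn => by
        cases n with
        | zero => rfl
        | succ m => simp [Ty.upr] at hn) h.2

lemma wf_subst : ∀ (A : Ty) {σ : ℕ → Ty}, WF A → (∀ n, WF (σ n)) → WF (Ty.subst σ A) := by
  intro A
  induction A with
  | var n => intro σ _ hσ; exact hσ n
  | box B ih => intro σ h hσ; exact ih h hσ
  | arrow B C ihB ihC => intro σ h hσ; exact ⟨ihB h.1 hσ, ihC h.2 hσ⟩
  | mu B ih =>
      intro σ h hσ
      refine ⟨ih h.1 ?_, ?_⟩
      · intro n
        cases n with
        | zero => trivial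
        | succ m => exact wf_rename (σ m) Nat.succ (hσ m)
      · exact proper_subst B h.2 (fun n hn => by
          cases n with
          | zero => exact fun hc => hn rfl
          | succ m =>
              show Proper (Ty.shiftUp (σ m)) 0
              exact not_free_proper _ 0 (not_free_rename (σ m) (fun a => by omega)))

lemma wf_unfold {A : Ty} (h : WF (Ty.mu A)) : WF (unfoldMu A) := by
  unfold unfoldMu openT
  refine wf_subst A h.1 ?_
  intro n
  cases n with
  | zero => exact h
  | succ m => trivial

lemma proper_unfold {D : Ty} (X : ℕ) (h : Proper D (X+1)) : Proper (unfoldMu D) X := by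
  unfold unfoldMu openT
  refine proper_subst D h ?_
  intro n hn
  cases n with
  | zero => exact Or.inl h
  | succ m => exact fun hc => hn (by omega)

/-! ## Section 4: weight -/

def w : Ty → ℕ
  | .var _ => 0
  | .box _ => 0
  | .arrow A B => if IsTV B then 0 else w A + w B + 1
  | .mu A => if IsTV (Ty.mu A) then 0 else w A + 1

lemma w_sopen {B : Ty} (hB : ¬ IsTV B) : ∀ (A : Ty) (k : ℕ), Proper A k →
    w (Ty.subst (sopen k B) A) ≤ w A := by
  intro A
  induction A with
  | var j =>
      intro k hp
      have hj : j ≠ k := hp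
      show w (sopen k B j) ≤ 0
      unfold sopen
      by_cases h1 : j < k
      · rw [if_pos h1]; exact le_refl 0
      · rw [if_neg h1, if_neg hj]; exact le_refl 0
  | box C _ => intro k _; exact le_refl 0
  | arrow C D ihC ihD =>
      intro k hp
      have hw : w (Ty.arrow C D) = if IsTV D then 0 else w C + w D + 1 := rfl
      have hw2 : w (Ty.arrow (Ty.subst (sopen k B) C) (Ty.subst (sopen k B) D)) =
          if IsTV (Ty.subst (sopen k B) D) then 0
          else w (Ty.subst (sopen k B) C) + w (Ty.subst (sopen k B) D) + 1 := rfl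
      show w (Ty.arrow (Ty.subst (sopen k B) C) (Ty.subst (sopen k B) D)) ≤ _
      rw [hw, hw2]
      by_cases h : IsTV D
      · rw [if_pos h, if_pos ((isTV_subst_guard (guard_sopen hB k)).2 h)]
      · rw [if_neg h, if_neg (fun hc => h ((isTV_subst_guard (guard_sopen hB k)).1 hc))]
        cases hp with
        | inl hp =>
            have h1 := ihC k hp.1
            have h2 := ihD k hp.2
            omega
        | inr hp => exact absurd hp h
  | mu C ih =>
      intro k hp
      rw [subst_sopen_mu]
      have hw : w (Ty.mu C) = if IsTV (Ty.mu C) then 0 else w C + 1 := rfl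
      have hw2 : w (Ty.mu (Ty.subst (sopen (k+1) B) C)) =
          if IsTV (Ty.mu (Ty.subst (sopen (k+1) B) C)) then 0
          else w (Ty.subst (sopen (k+1) B) C) + 1 := rfl
      rw [hw, hw2]
      by_cases h : IsTV (Ty.mu C)
      · rw [if_pos h, if_pos ((isTV_sopen_mu B C k hB).2 h)]
      · rw [if_neg h, if_neg (fun hc => h ((isTV_sopen_mu B C k hB).1 hc))]
        cases hp with
        | inl hp =>
            have h1 := ih (k+1) hp
            omega
        | inr hp => exact absurd hp h

lemma w_unfold_le {A : Ty} (hp : Proper A 0) (htv : ¬ IsTV (Ty.mu A)) :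
    w (unfoldMu A) ≤ w A := by
  rw [unfold_eq_subst]
  exact w_sopen htv A 0 hp

lemma w_mu_eq {A : Ty} (htv : ¬ IsTV (Ty.mu A)) : w (Ty.mu A) = w A + 1 := by
  show (if IsTV (Ty.mu A) then 0 else w A + 1) = _
  rw [if_neg htv]

lemma w_arrow_eq {A B : Ty} (htv : ¬ IsTV B) : w (Ty.arrow A B) = w A + w B + 1 := by
  show (if IsTV B then 0 else w A + w B + 1) = _
  rw [if_neg htv]

/-! ## Section 5: the semantics -/

section Semantics

variable {W : Type*} {V : Type*} (acc : W → W → Prop) (ap : V → V → V)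

/-- the well-founded relation for defining `sem` -/
def semRel : (W × ℕ) → (W × ℕ) → Prop := Prod.Lex (fun q p => acc p q) (· < ·)

lemma semRel_wf (hwf : ConverselyWF acc) : WellFounded (semRel acc) :=
  WellFounded.prod_lex hwf (Nat.lt_wfRel.wf)

noncomputable def semAux (hwf : ConverselyWF acc) : W × ℕ → Ty → (ℕ → W → Set V) → Set V :=
  (semRel_wf acc hwf).fix fun pn rec A η =>
    if h : w A ≤ pn.2 then
      match A, h with
      | Ty.var n, _ => η n pn.1
      | Ty.box B, _ =>
          {u | ∀ q (hq : acc pn.1 q), u ∈ rec (q, w B)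
            (by rw [← Prod.mk.eta (p := pn)]; exact Prod.Lex.left _ _ hq) B η}
      | Ty.arrow B C, h =>
          if htv : IsTV C then Set.univ else
          {u | (∀ v, v ∈ rec (pn.1, w B)
                  (by rw [← Prod.mk.eta (p := pn)]
                      refine Prod.Lex.right _ ?_
                      have := w_arrow_eq (A := B) htv
                      omega) B η →
                ap u v ∈ rec (pn.1, w C)
                  (by rw [← Prod.mk.eta (p := pn)]
                      refine Prod.Lex.right _ ?_
                      have := w_arrow_eq (A := B) htv
                      omega) C η)
              ∧ ∀ q (hq : acc pn.1 q), u ∈ rec (q, w (Ty.arrow B C))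
                  (by rw [← Prod.mk.eta (p := pn)]; exact Prod.Lex.left _ _ hq) (Ty.arrow B C) η}
      | Ty.mu B, h =>
          if htv : IsTV (Ty.mu B) then Set.univ else
          if hp : Proper B 0 then
            rec (pn.1, w (unfoldMu B))
              (by rw [← Prod.mk.eta (p := pn)]
                  refine Prod.Lex.right _ ?_
                  have h1 := w_unfold_le hp htv
                  have h2 := w_mu_eq htv
                  omega) (unfoldMu B) η
          else ∅
    else ∅

noncomputable def sem (hwf : ConverselyWF acc) (A : Ty) (η : ℕ → W → Set V) (p : W) : Set V :=
  semAux acc ap hwf (p, w A) A η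

end Semantics

/-! ## Section 5b: equations for sem -/

section SemLemmas

variable {W : Type*} {V : Type*} (acc : W → W → Prop) (ap : V → V → V)
  (hwf : ConverselyWF acc)

lemma sem_var (n : ℕ) (η : ℕ → W → Set V) (p : W) :
    sem acc ap hwf (Ty.var n) η p = η n p := by
  unfold sem semAux
  rw [WellFounded.fix_eq, dif_pos (le_refl _)]

lemma sem_box (B : Ty) (η : ℕ → W → Set V) (p : W) :
    sem acc ap hwf (Ty.box B) η p = {u | ∀ q, acc p q → u ∈ sem acc ap hwf B η q} := by
  unfold sem semAux
  rw [WellFounded.fix_eq, dif_pos (le_refl _)]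

lemma sem_arrow_tv {C : Ty} (htv : IsTV C) (B : Ty) (η : ℕ → W → Set V) (p : W) :
    sem acc ap hwf (Ty.arrow B C) η p = Set.univ := by
  unfold sem semAux
  rw [WellFounded.fix_eq, dif_pos (le_refl _)]
  exact dif_pos htv

lemma sem_arrow_ntv {C : Ty} (htv : ¬ IsTV C) (B : Ty) (η : ℕ → W → Set V) (p : W) :
    sem acc ap hwf (Ty.arrow B C) η p =
      {u | (∀ v ∈ sem acc ap hwf B η p, ap u v ∈ sem acc ap hwf C η p)
        ∧ ∀ q, acc p q → u ∈ sem acc ap hwf (Ty.arrow B C) η q} := by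
  unfold sem semAux
  rw [WellFounded.fix_eq, dif_pos (le_refl _)]
  exact dif_neg htv

lemma sem_mu_tv {B : Ty} (htv : IsTV (Ty.mu B)) (η : ℕ → W → Set V) (p : W) :
    sem acc ap hwf (Ty.mu B) η p = Set.univ := by
  unfold sem semAux
  rw [WellFounded.fix_eq, dif_pos (le_refl _)]
  exact dif_pos htv

lemma sem_mu_proper {B : Ty} (htv : ¬ IsTV (Ty.mu B)) (hp : Proper B 0)
    (η : ℕ → W → Set V) (p : W) :
    sem acc ap hwf (Ty.mu B) η p = sem acc ap hwf (unfoldMu B) η p := by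
  unfold sem semAux
  rw [WellFounded.fix_eq, dif_pos (le_refl _)]
  exact (dif_neg htv).trans (dif_pos hp)

lemma sem_mu_junk {B : Ty} (htv : ¬ IsTV (Ty.mu B)) (hp : ¬ Proper B 0)
    (η : ℕ → W → Set V) (p : W) :
    sem acc ap hwf (Ty.mu B) η p = ∅ := by
  unfold sem semAux
  rw [WellFounded.fix_eq, dif_pos (le_refl _)]
  exact (dif_neg htv).trans (dif_neg hp)

end SemLemmas

/-! ## Section 5c: semantic lemmas -/

/-- induction principle matching the recursion of `sem` -/
lemma sem_ind {W : Type*} {acc : W → W → Prop} (hwf : ConverselyWF acc) (P : W → Ty → Prop)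
    (step : ∀ p A, (∀ q B, acc p q → P q B) → (∀ B, w B < w A → P p B) → P p A) :
    ∀ p A, P p A := by
  have main : ∀ pn : W × ℕ, ∀ A, w A ≤ pn.2 → P pn.1 A := by
    intro pn
    refine (semRel_wf acc hwf).induction (C := fun pn => ∀ A, w A ≤ pn.2 → P pn.1 A) pn ?_
    intro pn ih A hA
    refine step pn.1 A ?_ ?_
    · intro q B hq
      exact ih (q, w B) (by rw [← Prod.mk.eta (p := pn)]; exact Prod.Lex.left _ _ hq) B le_rfl
    · intro B hB
      exact ih (pn.1, w B)
        (by rw [← Prod.mk.eta (p := pn)]; exact Prod.Lex.right _ (by omega)) B le_rfl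
  intro p A
  exact main (p, w A) A le_rfl

section SemLemmas2

variable {W : Type*} {V : Type*} (acc : W → W → Prop) (ap : V → V → V)
  (hwf : ConverselyWF acc)

lemma sem_tv : ∀ (p : W) (A : Ty), IsTV A → ∀ η, sem acc ap hwf A η p = Set.univ := by
  have h := hwf.induction (C := fun p => ∀ A : Ty, IsTV A → ∀ η, sem acc ap hwf A η p = Set.univ)
  intro p
  refine h p ?_
  intro p ih A htv η
  cases A with
  | var n => exact absurd htv (not_isTV_var n)
  | box B =>
      rw [sem_box]
      apply Set.eq_univ_of_forall
      intro u q hq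
      rw [ih q hq B ((isTV_box B).1 htv) η]
      trivial
  | arrow B C => exact sem_arrow_tv acc ap hwf ((isTV_arrow B C).1 htv) B η p
  | mu B => exact sem_mu_tv acc ap hwf htv η p

/-- environments agreeing on all reachable worlds give the same semantics -/
lemma sem_env_congr : ∀ (p : W) (A : Ty), ∀ (η₁ η₂ : ℕ → W → Set V),
    (∀ n q, Relation.ReflTransGen acc p q → η₁ n q = η₂ n q) →
    sem acc ap hwf A η₁ p = sem acc ap hwf A η₂ p := by
  refine sem_ind hwf _ ?_
  intro p A ihq ihw η₁ η₂ hag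
  cases A with
  | var n =>
      rw [sem_var, sem_var]
      exact hag n p Relation.ReflTransGen.refl
  | box B =>
      rw [sem_box, sem_box]
      apply Set.eq_of_subset_of_subset <;>
      · intro u hu q hq
        have heq := ihq q B hq η₁ η₂
          (fun n r hr => hag n r (Relation.ReflTransGen.head hq hr))
        first
          | (rw [← heq]; exact hu q hq)
          | (rw [heq]; exact hu q hq)
  | arrow B C =>
      by_cases htv : IsTV C
      · rw [sem_arrow_tv acc ap hwf htv, sem_arrow_tv acc ap hwf htv]
      · have hB := ihw B (by rw [w_arrow_eq htv]; omega) η₁ η₂ hag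
        have hC := ihw C (by rw [w_arrow_eq htv]; omega) η₁ η₂ hag
        rw [sem_arrow_ntv acc ap hwf htv, sem_arrow_ntv acc ap hwf htv]
        apply Set.eq_of_subset_of_subset <;>
        · rintro u ⟨h1, h2⟩
          constructor
          · intro v hv
            first
              | (rw [← hB, ← hC] at *; exact h1 v hv)
              | (rw [hB, hC] at *; exact h1 v hv)
          · intro q hq
            have heq := ihq q (Ty.arrow B C) hq η₁ η₂
              (fun n r hr => hag n r (Relation.ReflTransGen.head hq hr))
            first
              | (rw [← heq]; exact h2 q hq)
              | (rw [heq]; exact h2 q hq)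
  | mu B =>
      by_cases htv : IsTV (Ty.mu B)
      · rw [sem_mu_tv acc ap hwf htv, sem_mu_tv acc ap hwf htv]
      · by_cases hp : Proper B 0
        · rw [sem_mu_proper acc ap hwf htv hp, sem_mu_proper acc ap hwf htv hp]
          exact ihw (unfoldMu B)
            (by have := w_unfold_le hp htv; rw [w_mu_eq htv]; omega) η₁ η₂ hag
        · rw [sem_mu_junk acc ap hwf htv hp, sem_mu_junk acc ap hwf htv hp]

/-- heredity -/
lemma sem_hered {η : ℕ → W → Set V} (hη : Hereditary acc η) :
    ∀ (p : W) (A : Ty) (q : W), acc p q → sem acc ap hwf A η p ⊆ sem acc ap hwf A η q := by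
  refine sem_ind hwf (fun p A => ∀ q, acc p q → sem acc ap hwf A η p ⊆ sem acc ap hwf A η q) ?_
  intro p A ihq ihw q hq
  cases A with
  | var n =>
      rw [sem_var, sem_var]
      exact hη n p q hq
  | box B =>
      rw [sem_box, sem_box]
      intro u hu r hr
      exact ihq q B hq r hr (hu q hq)
  | arrow B C =>
      by_cases htv : IsTV C
      · rw [sem_arrow_tv acc ap hwf htv, sem_arrow_tv acc ap hwf htv]
      · rw [sem_arrow_ntv acc ap hwf htv]
        rintro u ⟨_, h2⟩
        exact h2 q hq
  | mu B =>
      by_cases htv : IsTV (Ty.mu B)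
      · rw [sem_mu_tv acc ap hwf htv, sem_mu_tv acc ap hwf htv]
      · by_cases hp : Proper B 0
        · rw [sem_mu_proper acc ap hwf htv hp, sem_mu_proper acc ap hwf htv hp]
          exact ihw (unfoldMu B)
            (by have := w_unfold_le hp htv; rw [w_mu_eq htv]; omega) q hq
        · rw [sem_mu_junk acc ap hwf htv hp, sem_mu_junk acc ap hwf htv hp]

lemma sem_hered_rtg {η : ℕ → W → Set V} (hη : Hereditary acc η) {p q : W}
    (h : Relation.ReflTransGen acc p q) (A : Ty) :
    sem acc ap hwf A η p ⊆ sem acc ap hwf A η q := by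
  induction h with
  | refl => exact subset_rfl
  | tail hstep hq ih => exact subset_trans ih (sem_hered acc ap hwf hη _ A _ hq)

/-- the closed form of the arrow semantics -/
lemma sem_arrow_eq (B C : Ty) (η : ℕ → W → Set V) : ∀ (p : W),
    sem acc ap hwf (Ty.arrow B C) η p =
      {u | ∀ q, Relation.ReflTransGen acc p q →
        ∀ v ∈ sem acc ap hwf B η q, ap u v ∈ sem acc ap hwf C η q} := by
  by_cases htv : IsTV C
  · intro p
    rw [sem_arrow_tv acc ap hwf htv]
    apply (Set.eq_univ_of_forall ?_).symm
    intro u q hq v hv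
    rw [sem_tv acc ap hwf q C htv η]
    trivial
  · have h := hwf.induction (C := fun p => sem acc ap hwf (Ty.arrow B C) η p =
      {u | ∀ q, Relation.ReflTransGen acc p q →
        ∀ v ∈ sem acc ap hwf B η q, ap u v ∈ sem acc ap hwf C η q})
    intro p
    refine h p ?_
    intro p ih
    rw [sem_arrow_ntv acc ap hwf htv]
    apply Set.eq_of_subset_of_subset
    · rintro u ⟨h1, h2⟩ q hq v hv
      rcases Relation.ReflTransGen.cases_head hq with rfl | ⟨r, hr, hrq⟩
      · exact h1 v hv
      · have := h2 r hr
        rw [ih r hr] at this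
        exact this q hrq v hv
    · intro u hu
      constructor
      · exact hu p Relation.ReflTransGen.refl
      · intro q hq
        rw [ih q hq]
        intro r hr v hv
        exact hu r (Relation.ReflTransGen.head hq hr) v hv

end SemLemmas2

/-! ## Section 5d: properness congruence, substitution, kl, uniqueness -/

section SemLemmas3

variable {W : Type*} {V : Type*} (acc : W → W → Prop) (ap : V → V → V)
  (hwf : ConverselyWF acc)

lemma sem_proper_congr : ∀ (p : W) (A : Ty), ∀ (X : ℕ) (η₁ η₂ : ℕ → W → Set V),
    Proper A X →
    (∀ n q, n ≠ X → η₁ n q = η₂ n q) →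
    (∀ q, Relation.TransGen acc p q → η₁ X q = η₂ X q) →
    sem acc ap hwf A η₁ p = sem acc ap hwf A η₂ p := by
  refine sem_ind hwf _ ?_
  intro p A ihq ihw X η₁ η₂ hprop hne hX
  have hagree : ∀ q, acc p q → ∀ n r, Relation.ReflTransGen acc q r → η₁ n r = η₂ n r := by
    intro q hq n r hr
    by_cases hn : n = X
    · subst hn
      exact hX r (Relation.TransGen.head' hq hr)
    · exact hne n r hn
  cases A with
  | var n =>
      rw [sem_var, sem_var]
      exact hne n p hprop
  | box B =>
      rw [sem_box, sem_box]
      apply Set.eq_of_subset_of_subset <;>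
      · intro u hu q hq
        have heq := sem_env_congr acc ap hwf q B η₁ η₂ (hagree q hq)
        first
          | (rw [← heq]; exact hu q hq)
          | (rw [heq]; exact hu q hq)
  | arrow B C =>
      by_cases htv : IsTV C
      · rw [sem_arrow_tv acc ap hwf htv, sem_arrow_tv acc ap hwf htv]
      · have hpp : Proper B X ∧ Proper C X := by
          cases hprop with
          | inl h => exact h
          | inr h => exact absurd h htv
        have hB := ihw B (by rw [w_arrow_eq htv]; omega) X η₁ η₂ hpp.1 hne hX
        have hC := ihw C (by rw [w_arrow_eq htv]; omega) X η₁ η₂ hpp.2 hne hX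
        rw [sem_arrow_ntv acc ap hwf htv, sem_arrow_ntv acc ap hwf htv]
        apply Set.eq_of_subset_of_subset <;>
        · rintro u ⟨h1, h2⟩
          constructor
          · intro v hv
            first
              | (rw [← hB, ← hC] at *; exact h1 v hv)
              | (rw [hB, hC] at *; exact h1 v hv)
          · intro q hq
            have heq := sem_env_congr acc ap hwf q (Ty.arrow B C) η₁ η₂ (hagree q hq)
            first
              | (rw [← heq]; exact h2 q hq)
              | (rw [heq]; exact h2 q hq)
  | mu B =>
      by_cases htv : IsTV (Ty.mu B)
      · rw [sem_mu_tv acc ap hwf htv, sem_mu_tv acc ap hwf htv]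
      · have hpB : Proper B (X+1) := by
          cases hprop with
          | inl h => exact h
          | inr h => exact absurd h htv
        by_cases hp : Proper B 0
        · rw [sem_mu_proper acc ap hwf htv hp, sem_mu_proper acc ap hwf htv hp]
          exact ihw (unfoldMu B)
            (by have := w_unfold_le hp htv; rw [w_mu_eq htv]; omega) X η₁ η₂
            (proper_unfold X hpB) hne hX
        · rw [sem_mu_junk acc ap hwf htv hp, sem_mu_junk acc ap hwf htv hp]

lemma proper_ups_iff {σ : ℕ → Ty} (hg : ∀ n, ¬ IsTV (σ n)) (B : Ty) :
    Proper (Ty.subst (Ty.ups σ) B) 0 ↔ Proper B 0 := by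
  rw [proper_iff_jbOcc, proper_iff_jbOcc,
    jbOcc_subst_low B (Ty.ups σ) 0 (guard_ups hg) rfl ?_]
  intro n hn
  obtain ⟨m, rfl⟩ : ∃ m, n = m + 1 := ⟨n - 1, by omega⟩
  show jbOcc (Ty.shiftUp (σ m)) 0 = ⊤
  unfold Ty.shiftUp
  exact jbOcc_rename_notin (σ m) (fun a => by omega)

lemma sem_subst : ∀ (p : W) (A : Ty), ∀ (σ : ℕ → Ty) (η : ℕ → W → Set V),
    (∀ n, ¬ IsTV (σ n)) →
    sem acc ap hwf (Ty.subst σ A) η p = sem acc ap hwf A (fun n q => sem acc ap hwf (σ n) η q) p := by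
  refine sem_ind hwf _ ?_
  intro p A ihq ihw σ η hg
  cases A with
  | var n =>
      show sem acc ap hwf (σ n) η p = _
      rw [sem_var]
  | box B =>
      show sem acc ap hwf (Ty.box (Ty.subst σ B)) η p = _
      rw [sem_box, sem_box]
      apply Set.eq_of_subset_of_subset <;>
      · intro u hu q hq
        have heq := ihq q B hq σ η hg
        first
          | (rw [← heq]; exact hu q hq)
          | (rw [heq]; exact hu q hq)
  | arrow B C =>
      show sem acc ap hwf (Ty.arrow (Ty.subst σ B) (Ty.subst σ C)) η p = _
      have htv' : IsTV (Ty.subst σ C) ↔ IsTV C := isTV_subst_guard hg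
      by_cases htv : IsTV C
      · rw [sem_arrow_tv acc ap hwf (htv'.2 htv), sem_arrow_tv acc ap hwf htv]
      · have hB := ihw B (by rw [w_arrow_eq htv]; omega) σ η hg
        have hC := ihw C (by rw [w_arrow_eq htv]; omega) σ η hg
        rw [sem_arrow_ntv acc ap hwf (fun hc => htv (htv'.1 hc)), sem_arrow_ntv acc ap hwf htv]
        apply Set.eq_of_subset_of_subset <;>
        · rintro u ⟨h1, h2⟩
          constructor
          · intro v hv
            first
              | (rw [← hB, ← hC] at *; exact h1 v hv)
              | (rw [hB, hC] at *; exact h1 v hv)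
          · intro q hq
            have heq := ihq q (Ty.arrow B C) hq σ η hg
            have hee : Ty.subst σ (Ty.arrow B C) = Ty.arrow (Ty.subst σ B) (Ty.subst σ C) := rfl
            rw [hee] at heq
            first
              | (rw [← heq]; exact h2 q hq)
              | (rw [heq]; exact h2 q hq)
  | mu B =>
      rw [Ty.subst_def_mu]
      have htv' : IsTV (Ty.mu (Ty.subst (Ty.ups σ) B)) ↔ IsTV (Ty.mu B) := by
        rw [← Ty.subst_def_mu]
        exact isTV_subst_guard hg
      by_cases htv : IsTV (Ty.mu B)
      · rw [sem_mu_tv acc ap hwf (htv'.2 htv), sem_mu_tv acc ap hwf htv]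
      · have hprop : Proper (Ty.subst (Ty.ups σ) B) 0 ↔ Proper B 0 := proper_ups_iff hg B
        by_cases hp : Proper B 0
        · rw [sem_mu_proper acc ap hwf (fun hc => htv (htv'.1 hc)) (hprop.2 hp),
            sem_mu_proper acc ap hwf htv hp]
          have hcomm : unfoldMu (Ty.subst (Ty.ups σ) B) = Ty.subst σ (unfoldMu B) :=
            (subst_unfoldMu σ B).symm
          rw [hcomm]
          exact ihw (unfoldMu B)
            (by have := w_unfold_le hp htv; rw [w_mu_eq htv]; omega) σ η hg
        · rw [sem_mu_junk acc ap hwf (fun hc => htv (htv'.1 hc)) (fun hc => hp (hprop.1 hc)),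
            sem_mu_junk acc ap hwf htv hp]

lemma sem_kl (hlin : LocallyLinear acc) {η : ℕ → W → Set V} (hη : Hereditary acc η)
    (A B : Ty) (p : W) :
    sem acc ap hwf (Ty.box (Ty.arrow A B)) η p
      = sem acc ap hwf (Ty.arrow (Ty.box A) (Ty.box B)) η p := by
  by_cases htv : IsTV B
  · rw [sem_tv acc ap hwf p (Ty.box (Ty.arrow A B)) ((isTV_box _).2 ((isTV_arrow A B).2 htv)) η,
      sem_arrow_tv acc ap hwf ((isTV_box B).2 htv)]
  · apply Set.eq_of_subset_of_subset
    · intro u hu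
      rw [sem_box] at hu
      rw [sem_arrow_eq]
      intro q hq v hv
      rw [sem_box]
      intro r hr
      rw [sem_box] at hv
      rcases Relation.ReflTransGen.cases_head hq with rfl | ⟨t, ht, htq⟩
      · have h1 := hu r hr
        rw [sem_arrow_eq] at h1
        exact h1 r Relation.ReflTransGen.refl v (hv r hr)
      · have h1 := hu t ht
        rw [sem_arrow_eq] at h1
        exact h1 r (htq.tail hr) v (hv r hr)
    · intro u hu
      rw [sem_arrow_eq] at hu
      rw [sem_box]
      intro q hq
      rw [sem_arrow_eq]
      intro r hr v hv
      have htrans : Relation.TransGen acc p r := Relation.TransGen.head' hq hr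
      obtain ⟨t, hpt, htr⟩ := (Relation.TransGen.tail'_iff).1 htrans
      obtain ⟨s, hts, hsr, hs⟩ := hlin t r htr
      have hps : Relation.ReflTransGen acc p s := hpt.trans hts
      have hvb : v ∈ sem acc ap hwf (Ty.box A) η s := by
        rw [sem_box]
        intro s' hs'
        exact sem_hered_rtg acc ap hwf hη (hs s' hs') A hv
      have := hu s hps v hvb
      rw [sem_box] at this
      exact this r hsr

lemma sem_uniq {C A : Ty} (hC : Proper C 0) (htvC : ¬ IsTV (Ty.mu C)) (hA : ¬ IsTV A)
    (η : ℕ → W → Set V)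
    (hsem : ∀ p, sem acc ap hwf A η p = sem acc ap hwf (openT C A) η p) :
    ∀ p, sem acc ap hwf A η p = sem acc ap hwf (Ty.mu C) η p := by
  have hwf' : WellFounded (Relation.TransGen (fun q p => acc p q)) := hwf.transGen
  intro p
  refine hwf'.induction
    (C := fun p => sem acc ap hwf A η p = sem acc ap hwf (Ty.mu C) η p) p ?_
  intro p ih
  have e1 : sem acc ap hwf A η p
      = sem acc ap hwf C (fun n q => sem acc ap hwf (sopen 0 A n) η q) p := by
    rw [hsem p, sopen_zero_eq C A]
    exact sem_subst acc ap hwf p C (sopen 0 A) η (guard_sopen hA 0)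
  have e2 : sem acc ap hwf (Ty.mu C) η p
      = sem acc ap hwf C (fun n q => sem acc ap hwf (sopen 0 (Ty.mu C) n) η q) p := by
    rw [sem_mu_proper acc ap hwf htvC hC, unfold_eq_subst]
    exact sem_subst acc ap hwf p C (sopen 0 (Ty.mu C)) η (guard_sopen htvC 0)
  rw [e1, e2]
  apply sem_proper_congr acc ap hwf p C 0 _ _ hC
  · intro n q hn
    obtain ⟨m, rfl⟩ : ∃ m, n = m + 1 := ⟨n - 1, by omega⟩
    show sem acc ap hwf (sopen 0 A (m+1)) η q = sem acc ap hwf (sopen 0 (Ty.mu C) (m+1)) η q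
    rw [sopen_zero_succ, sopen_zero_succ]
  · intro q hq
    show sem acc ap hwf (sopen 0 A 0) η q = sem acc ap hwf (sopen 0 (Ty.mu C) 0) η q
    rw [sopen_zero_val, sopen_zero_val]
    exact ih q (Relation.TransGen.swap _ _ hq)

end SemLemmas3

/-! ## Section 6: final assembly -/

lemma enat_fix_top {a d : ℕ∞} (hd : 1 ≤ d) (h : a = d + a) : a = ⊤ := by
  by_contra ha
  have h' : (0:ℕ∞) + a = d + a := by rw [zero_add]; exact h
  have h0 := WithTop.add_right_cancel ha h'
  rw [← h0] at hd
  simp at hd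

lemma enat_solve {a c d : ℕ∞} (hd : 1 ≤ d) (h : a = min c (d + a)) : a = c := by
  rcases le_or_gt c a with hca | hca
  · rw [min_eq_left (le_trans hca le_add_self)] at h
    exact h
  · exfalso
    rcases min_cases c (d + a) with ⟨he, _⟩ | ⟨he, _⟩
    · rw [he] at h
      exact absurd h (ne_of_lt hca)
    · rw [he] at h
      have := enat_fix_top hd h
      rw [this] at hca
      exact not_top_lt hca

lemma enat_one_add_eq_top {x : ℕ∞} (h : (1:ℕ∞) + x = ⊤) : x = ⊤ := by
  rcases WithTop.add_eq_top.1 h with h1 | h1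
  · exact absurd h1 ENat.one_ne_top
  · exact h1

lemma enat_cast_ne_zero {b : ℕ} (h : 1 ≤ (b:ℕ∞)) : b ≠ 0 := by
  rintro rfl
  simp at h

lemma isTV_of_tail_eq {A B : Ty} (h : tailOf A = tailOf B) : IsTV A ↔ IsTV B := by
  rw [isTV_iff_cycB, isTV_iff_cycB, h]

lemma wf_jb_top : ∀ (A : Ty), WF A → jb A = ⊤ := by
  intro A
  induction A with
  | var n => intro _; rfl
  | box B ih =>
      intro h
      show (if IsTV B then ⊤ else 1 + jb B) = ⊤
      by_cases htv : IsTV B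
      · rw [if_pos htv]
      · rw [if_neg htv, ih h, add_top]
  | arrow B C ihB ihC =>
      intro h
      show (if IsTV C then ⊤ else min (jb B) (jb C)) = ⊤
      by_cases htv : IsTV C
      · rw [if_pos htv]
      · rw [if_neg htv, ihB h.1, ihC h.2, min_top_left]
  | mu B ih =>
      intro h
      show (if IsTV (Ty.mu B) then ⊤ else if Proper B 0 then jb B else 0) = ⊤
      by_cases htv : IsTV (Ty.mu B)
      · rw [if_pos htv]
      · rw [if_neg htv, if_pos h.2, ih h.1]

section Final

variable {W : Type*} {V : Type*} (acc : W → W → Prop) (ap : V → V → V)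
  (hwf : ConverselyWF acc)

lemma interp_arrow_step (Int : Interp W acc V ap) {B C : Ty} (hB : WF B) (hC : WF C)
    (htv : ¬ IsTV (Ty.arrow B C)) (η : ℕ → W → Set V) (p : W) :
    Int.I (Ty.arrow B C) η p = {u | (∀ v ∈ Int.I B η p, ap u v ∈ Int.I C η p)
      ∧ ∀ q, acc p q → u ∈ Int.I (Ty.arrow B C) η q} := by
  ext u
  rw [Int.I_arrow B C η p hB hC htv]
  simp only [Set.mem_setOf_eq]
  constructor
  · intro h
    constructor
    · intro v hv
      exact h p Relation.ReflTransGen.refl v hv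
    · intro q hq
      rw [Int.I_arrow B C η q hB hC htv]
      intro r hr v hv
      exact h r (Relation.ReflTransGen.head hq hr) v hv
  · rintro ⟨h1, h2⟩ q hq v hv
    rcases Relation.ReflTransGen.cases_head hq with rfl | ⟨r, hr, hrq⟩
    · exact h1 v hv
    · have h3 := h2 r hr
      rw [Int.I_arrow B C η r hB hC htv] at h3
      exact h3 q hrq v hv

lemma interp_eq_sem (Int : Interp W acc V ap) :
    ∀ (p : W) (A : Ty), WF A → ∀ η, Int.I A η p = sem acc ap hwf A η p := by
  refine sem_ind hwf (fun p A => WF A → ∀ η, Int.I A η p = sem acc ap hwf A η p) ?_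
  intro p A ihq ihw hWF η
  by_cases htv : IsTV A
  · rw [Int.I_tv A η p hWF htv, sem_tv acc ap hwf p A htv η]
  · cases A with
    | var n => rw [Int.I_var n η p, sem_var]
    | box B =>
        have hB : WF B := hWF
        rw [Int.I_box B η p hB htv, sem_box]
        ext u
        simp only [Set.mem_setOf_eq]
        constructor <;>
        · intro h q hq
          have heq := ihq q B hq hB η
          first
            | (rw [← heq]; exact h q hq)
            | (rw [heq]; exact h q hq)
    | arrow B C =>
        have hB : WF B := hWF.1
        have hC : WF C := hWF.2
        have htvC : ¬ IsTV C := fun hc => htv ((isTV_arrow B C).2 hc)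
        have h1 := ihw B (by rw [w_arrow_eq htvC]; omega) hB η
        have h2 := ihw C (by rw [w_arrow_eq htvC]; omega) hC η
        rw [interp_arrow_step acc ap Int hB hC htv η p, sem_arrow_ntv acc ap hwf htvC]
        ext u
        simp only [Set.mem_setOf_eq]
        constructor <;>
        · rintro ⟨ha, hb⟩
          constructor
          · intro v hv
            first
              | (rw [← h1, ← h2] at *; exact ha v hv)
              | (rw [h1, h2] at *; exact ha v hv)
          · intro q hq
            have heq := ihq q (Ty.arrow B C) hq hWF η
            first
              | (rw [← heq]; exact hb q hq)
              | (rw [heq]; exact hb q hq)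
    | mu B =>
        rw [Int.I_mu B η p hWF htv, sem_mu_proper acc ap hwf htv hWF.2]
        exact ihw (unfoldMu B)
          (by have := w_unfold_le hWF.2 htv; rw [w_mu_eq htv]; omega)
          (wf_unfold hWF) η

theorem tyEq_invariant (hlin : LocallyLinear acc) :
    ∀ {s : Bool} {A B : Ty}, TyEq s A B →
      tailOf A = tailOf B ∧ jb A = jb B ∧
      (jb A = ⊤ → jb B = ⊤ → ∀ η : ℕ → W → Set V, Hereditary acc η → ∀ p,
        sem acc ap hwf A η p = sem acc ap hwf B η p) := by
  intro s A B h
  induction h with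
  | refl s A => exact ⟨rfl, rfl, fun _ _ _ _ _ => rfl⟩
  | symm _ ih =>
      exact ⟨ih.1.symm, ih.2.1.symm, fun h2 h1 η hη p => (ih.2.2 h1 h2 η hη p).symm⟩
  | trans _ _ ih1 ih2 =>
      refine ⟨ih1.1.trans ih2.1, ih1.2.1.trans ih2.2.1, ?_⟩
      intro h1 h3 η hη p
      have hmid : jb _ = ⊤ := ih1.2.1 ▸ h1
      exact (ih1.2.2 h1 hmid η hη p).trans (ih2.2.2 hmid h3 η hη p)
  | boxCongr _ ih =>
      rename_i A B _
      refine ⟨by rw [tail_box, tail_box, ih.1], ?_, ?_⟩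
      · show (if IsTV A then ⊤ else 1 + jb A) = (if IsTV B then ⊤ else 1 + jb B)
        by_cases htv : IsTV A
        · rw [if_pos htv, if_pos ((isTV_of_tail_eq ih.1).1 htv)]
        · rw [if_neg htv, if_neg (fun hc => htv ((isTV_of_tail_eq ih.1).2 hc)), ih.2.1]
      · intro h1 h2 η hη p
        have hA : jb A = ⊤ := by
          by_cases htv : IsTV A
          · exact jb_top_of_tv htv
          · have : (if IsTV A then (⊤:ℕ∞) else 1 + jb A) = ⊤ := h1
            rw [if_neg htv] at this
            exact enat_one_add_eq_top this
        have hB : jb B = ⊤ := ih.2.1 ▸ hA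
        have hsem := ih.2.2 hA hB η hη
        rw [sem_box, sem_box]
        ext u
        simp only [Set.mem_setOf_eq]
        constructor <;>
        · intro h q hq
          first
            | (rw [← hsem q]; exact h q hq)
            | (rw [hsem q]; exact h q hq)
  | arrowCongr _ _ ih1 ih2 =>
      rename_i A B C D _ _
      refine ⟨by rw [tail_arrow, tail_arrow, ih2.1], ?_, ?_⟩
      · show (if IsTV B then ⊤ else min (jb A) (jb B))
            = (if IsTV D then ⊤ else min (jb C) (jb D))
        by_cases htv : IsTV B
        · rw [if_pos htv, if_pos ((isTV_of_tail_eq ih2.1).1 htv)]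
        · rw [if_neg htv, if_neg (fun hc => htv ((isTV_of_tail_eq ih2.1).2 hc)), ih1.2.1, ih2.2.1]
      · intro h1 h2 η hη p
        by_cases htv : IsTV B
        · rw [sem_arrow_tv acc ap hwf htv, sem_arrow_tv acc ap hwf ((isTV_of_tail_eq ih2.1).1 htv)]
        · have hmin : min (jb A) (jb B) = ⊤ := by
            have : (if IsTV B then (⊤:ℕ∞) else min (jb A) (jb B)) = ⊤ := h1
            rw [if_neg htv] at this
            exact this
          have hA : jb A = ⊤ := (min_eq_top.1 hmin).1
          have hB : jb B = ⊤ := (min_eq_top.1 hmin).2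
          have hC : jb C = ⊤ := ih1.2.1 ▸ hA
          have hD : jb D = ⊤ := ih2.2.1 ▸ hB
          have hAC := ih1.2.2 hA hC η hη
          have hBD := ih2.2.2 hB hD η hη
          rw [sem_arrow_eq, sem_arrow_eq]
          ext u
          simp only [Set.mem_setOf_eq]
          constructor
          · intro h q hq v hv
            rw [← hBD q]
            exact h q hq v (by rw [hAC q]; exact hv)
          · intro h q hq v hv
            rw [hBD q]
            exact h q hq v (by rw [← hAC q]; exact hv)
  | arrowTop s A =>
      have hTop : IsTV tyTop := by decide
      refine ⟨tail_arrow A tyTop, ?_, ?_⟩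
      · show (if IsTV tyTop then ⊤ else min (jb A) (jb tyTop)) = jb tyTop
        rw [if_pos hTop, jb_top_of_tv hTop]
      · intro _ _ η hη p
        rw [sem_arrow_tv acc ap hwf hTop, sem_tv acc ap hwf p tyTop hTop η]
  | fix s A =>
      refine ⟨tail_fix A, jb_fix A, ?_⟩
      intro h1 _ η hη p
      by_cases htv : IsTV (Ty.mu A)
      · rw [sem_mu_tv acc ap hwf htv, sem_tv acc ap hwf p (unfoldMu A) ((isTV_unfold A).2 htv) η]
      · have hp : Proper A 0 := by
          by_contra hp
          have : (if IsTV (Ty.mu A) then (⊤:ℕ∞) else if Proper A 0 then jb A else 0) = ⊤ := h1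
          rw [if_neg htv, if_neg hp] at this
          simp at this
        exact sem_mu_proper acc ap hwf htv hp η p
  | uniq h hC ih =>
      rename_i A C
      cases hTC : tailOf C with
      | free n b =>
          cases n with
          | zero =>
              have hocc : jbOcc C 0 ≤ (b:ℕ∞) := tail_free_occ C 0 b hTC
              have hb : b ≠ 0 :=
                enat_cast_ne_zero (le_trans ((proper_iff_jbOcc C 0).1 hC) hocc)
              have hTVmu : IsTV (Ty.mu C) := (isTV_mu_char C).2 (Or.inr ⟨b, hTC, hb⟩)
              have hopen : tailOf (openT C A) = Tail.comb b (tailOf A) := by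
                rw [tail_open, hTC]
              have hA : tailOf A = Tail.cycB := by
                have hh := ih.1
                rw [hopen] at hh
                cases h' : tailOf A with
                | free n' b' =>
                    rw [h'] at hh
                    simp only [Tail.comb] at hh
                    injection hh with e1 e2
                    omega
                | cycB => rfl
                | cycF b' =>
                    rw [h'] at hh
                    simp only [Tail.comb] at hh
                    injection hh with e1
                    omega
              refine ⟨?_, ?_, ?_⟩
              · rw [hA, (isTV_iff_cycB (Ty.mu C)).1 hTVmu]
              · rw [jb_top_of_tv ((isTV_iff_cycB A).2 hA), jb_top_of_tv hTVmu]
              · intro _ _ η hη p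
                rw [sem_tv acc ap hwf p A ((isTV_iff_cycB A).2 hA) η,
                  sem_tv acc ap hwf p (Ty.mu C) hTVmu η]
          | succ m =>
              have hopen : tailOf (openT C A) = Tail.free m b := by
                rw [tail_open, hTC]
              have hA : tailOf A = Tail.free m b := ih.1.trans hopen
              have hTmu : tailOf (Ty.mu C) = Tail.free m b := by
                rw [tail_mu, hTC]
                rfl
              have hAtv : ¬ IsTV A := by
                rw [isTV_iff_cycB, hA]
                simp
              have htvmu : ¬ IsTV (Ty.mu C) := by
                rw [isTV_iff_cycB, hTmu]
                simp
              have hjmu : jb (Ty.mu C) = jb C := by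
                show (if IsTV (Ty.mu C) then ⊤ else if Proper C 0 then jb C else 0) = jb C
                rw [if_neg htvmu, if_pos hC]
              have hjo : jb (openT C A) = min (jb C) (jbOcc C 0 + jb A) := by
                rw [sopen_zero_eq C A]
                exact jb_sopen hAtv C 0
              have hsolve : jb A = jb C :=
                enat_solve ((proper_iff_jbOcc C 0).1 hC) (ih.2.1.trans hjo)
              refine ⟨hA.trans hTmu.symm, hsolve.trans hjmu.symm, ?_⟩
              intro h1 h2 η hη p
              refine sem_uniq acc ap hwf hC htvmu hAtv η ?_ p
              intro p'
              exact ih.2.2 h1 (by rw [← ih.2.1]; exact h1) η hη p'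
      | cycB =>
          have hopen : tailOf (openT C A) = Tail.cycB := by
            rw [tail_open, hTC]
          have hA : tailOf A = Tail.cycB := ih.1.trans hopen
          have hTVmu : IsTV (Ty.mu C) := (isTV_mu_char C).2 (Or.inl hTC)
          refine ⟨?_, ?_, ?_⟩
          · rw [hA, (isTV_iff_cycB (Ty.mu C)).1 hTVmu]
          · rw [jb_top_of_tv ((isTV_iff_cycB A).2 hA), jb_top_of_tv hTVmu]
          · intro _ _ η hη p
            rw [sem_tv acc ap hwf p A ((isTV_iff_cycB A).2 hA) η,
              sem_tv acc ap hwf p (Ty.mu C) hTVmu η]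
      | cycF b =>
          have hopen : tailOf (openT C A) = Tail.cycF b := by
            rw [tail_open, hTC]
          have hA : tailOf A = Tail.cycF b := ih.1.trans hopen
          have hTmu : tailOf (Ty.mu C) = Tail.cycF b := by
            rw [tail_mu, hTC]
            rfl
          have hAtv : ¬ IsTV A := by
            rw [isTV_iff_cycB, hA]
            simp
          have htvmu : ¬ IsTV (Ty.mu C) := by
            rw [isTV_iff_cycB, hTmu]
            simp
          have hjmu : jb (Ty.mu C) = jb C := by
            show (if IsTV (Ty.mu C) then ⊤ else if Proper C 0 then jb C else 0) = jb C
            rw [if_neg htvmu, if_pos hC]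
          have hjo : jb (openT C A) = min (jb C) (jbOcc C 0 + jb A) := by
            rw [sopen_zero_eq C A]
            exact jb_sopen hAtv C 0
          have hsolve : jb A = jb C :=
            enat_solve ((proper_iff_jbOcc C 0).1 hC) (ih.2.1.trans hjo)
          refine ⟨hA.trans hTmu.symm, hsolve.trans hjmu.symm, ?_⟩
          intro h1 h2 η hη p
          refine sem_uniq acc ap hwf hC htvmu hAtv η ?_ p
          intro p'
          exact ih.2.2 h1 (by rw [← ih.2.1]; exact h1) η hη p'
  | kl A B =>
      refine ⟨?_, ?_, ?_⟩
      · rw [tail_box, tail_arrow, tail_arrow, tail_box]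
      · show (if IsTV (Ty.arrow A B) then ⊤ else 1 + jb (Ty.arrow A B))
            = (if IsTV (Ty.box B) then ⊤ else min (jb (Ty.box A)) (jb (Ty.box B)))
        by_cases htv : IsTV B
        · rw [if_pos ((isTV_arrow A B).2 htv), if_pos ((isTV_box B).2 htv)]
        · rw [if_neg (fun hc => htv ((isTV_arrow A B).1 hc)),
            if_neg (fun hc => htv ((isTV_box B).1 hc))]
          show 1 + (if IsTV B then ⊤ else min (jb A) (jb B))
              = min (if IsTV A then ⊤ else 1 + jb A) (if IsTV B then ⊤ else 1 + jb B)
          rw [if_neg htv, if_neg htv]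
          by_cases htvA : IsTV A
          · rw [if_pos htvA, jb_top_of_tv htvA]
            simp
          · rw [if_neg htvA, enat_add_min]
      · intro _ _ η hη p
        exact sem_kl acc ap hwf hlin hη A B p

end Final


/-- **Soundness of ≃** with respect to λA-frames. -/
theorem statement4
    (W : Type*) (hW : Nonempty W) (acc : W → W → Prop)
    (hwf : ConverselyWF acc) (hlin : LocallyLinear acc)
    (V : Type*) (alg : LambdaAlgebra V) (Int : Interp W acc V alg.ap)
    (A B : Ty) (hA : WF A) (hB : WF B) (hAB : TyEq true A B)
    (η : ℕ → W → Set V) (hη : Hereditary acc η) (p : W) :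
    Int.I A η p = Int.I B η p := by
  have hM := tyEq_invariant acc alg.ap hwf hlin hAB
  have hsem := hM.2.2 (wf_jb_top A hA) (wf_jb_top B hB) η hη p
  rw [interp_eq_sem acc alg.ap hwf Int p A hA η, interp_eq_sem acc alg.ap hwf Int p B hB η]
  exact hsem

end LambdaA
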